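/- arXiv:1105.3260 — 3 statements merged into one kernel-verified Lean document; each statement's English description precedes it below -/
import Mathlib

section
/- Consider the n-dimensional nonlinear nonautonomous delay system ẋ_i(t) = -a_ii(t)x_i(t) + Σ_{j≠i} a_ij(t)x_j(t) + Σ_{j=1}^n f_ij(t, x_j(h_ij(t))), i = 1,…,n, t ≥ t₀, where the a_ij are measurable essentially bounded, each f_ij(t,u) is continuous in u, measurable locally essentially bounded in t, and satisfies |f_ij(t,u)| ≤ b_ij(t)|u| with b_ij measurable essentially bounded, and the delays satisfy h_ij(t) ≤ t. Suppose there exist a_i > 0, τ > 0 and t₀ ≥ 0 such that inf_{t≥t₀} a_ii(t) ≥ a_i and t − h_ij(t) ≤ τ for all i,j, and that the n×n matrix B with diagonal entries b_ii = a_i − B_ii and off-diagonal entries b_ij = −A_ij − B_ij (i ≠ j), where A_ij = sup_{t≥t₀}|a_ij(t)| and B_ij = sup_{t≥t₀}|b_ij(t)|, is an M-matrix. Then every solution X(t) = (x_1(t),…,x_n(t))ᵀ of the system satisfies lim_{t→∞} X(t) = 0. -/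
open Real Filter

lemma deriv_neg_eventually_lt {f : ℝ → ℝ} {d t : ℝ}
    (hf : HasDerivAt f d t) (hd : d < 0) :
    ∀ᶠ s in nhdsWithin t (Set.Ioi t), f s < f t := by
  have hs : Tendsto (slope f t) (nhdsWithin t {t}ᶜ) (nhds d) :=
    hasDerivAt_iff_tendsto_slope.mp hf
  have hmono : nhdsWithin t (Set.Ioi t) ≤ nhdsWithin t {t}ᶜ :=
    nhdsWithin_mono t fun y hy => ne_of_gt hy
  have h1 : ∀ᶠ s in nhdsWithin t (Set.Ioi t), slope f t s < 0 :=
    (hs.mono_left hmono).eventually_lt_const hd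
  have h2 : ∀ᶠ s in nhdsWithin t (Set.Ioi t), s ∈ Set.Ioi t :=
    eventually_mem_nhdsWithin
  filter_upwards [h1, h2] with s hs1 hs2
  rw [slope_def_field] at hs1
  have hst : (0:ℝ) < s - t := sub_pos.2 (Set.mem_Ioi.mp hs2)
  by_contra hcon
  push_neg at hcon
  have h3 : (0:ℝ) ≤ (f s - f t) / (s - t) := div_nonneg (by linarith) hst.le
  linarith

lemma decay_est {f : ℝ → ℝ} {δ T T2 : ℝ} (hT : T ≤ T2)
    (hf : ∀ t ∈ Set.Icc T T2, ∃ d, d ≤ -δ ∧ HasDerivAt f d t) :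
    f T2 ≤ f T - δ * (T2 - T) := by
  have hgd : ∀ t ∈ Set.Icc T T2, ∃ d, d ≤ -δ ∧
      HasDerivAt (fun s => f s + δ * s) (d + δ) t := by
    intro t ht
    obtain ⟨d, hd, hder⟩ := hf t ht
    refine ⟨d, hd, hder.add ?_⟩
    simpa using (hasDerivAt_id t).const_mul δ
  have hanti : AntitoneOn (fun s => f s + δ * s) (Set.Icc T T2) := by
    apply antitoneOn_of_deriv_nonpos (convex_Icc T T2)
    · intro t ht
      obtain ⟨d, _, hder⟩ := hgd t ht
      exact hder.continuousAt.continuousWithinAt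
    · intro t ht
      rw [interior_Icc] at ht
      obtain ⟨d, _, hder⟩ := hgd t (Set.Ioo_subset_Icc_self ht)
      exact hder.differentiableAt.differentiableWithinAt
    · intro t ht
      rw [interior_Icc] at ht
      obtain ⟨d, hd, hder⟩ := hgd t (Set.Ioo_subset_Icc_self ht)
      rw [hder.deriv]; linarith
  have h1 := hanti (Set.left_mem_Icc.2 hT) (Set.right_mem_Icc.2 hT) hT
  simp only [] at h1
  linarith

lemma first_crossing {ι : Type*} [Finite ι] (y : ι → ℝ → ℝ) (L : ι → ℝ)
    (c T : ℝ) (hcT : c ≤ T)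
    (ycont : ∀ k, Continuous (y k))
    (past : ∀ k, ∀ s, c ≤ s → s ≤ T → y k s ≤ L k)
    (key : ∀ k t, T ≤ t → y k t = L k →
      (∀ k' s, c ≤ s → s ≤ t → y k' s ≤ L k') →
      ∃ d, d < 0 ∧ HasDerivAt (y k) d t) :
    ∀ k t, c ≤ t → y k t ≤ L k := by
  by_contra hcon
  push_neg at hcon
  obtain ⟨k0, t0, hct0, hv0⟩ := hcon
  set S : Set ℝ := {t | T ≤ t ∧ ∃ k, L k < y k t} with hSdef
  have ht0T : T < t0 := by
    by_contra hle
    push_neg at hle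
    exact absurd hv0 (not_lt.2 (past k0 t0 hct0 hle))
  have hSne : S.Nonempty := ⟨t0, ht0T.le, k0, hv0⟩
  have hbdd : BddBelow S := ⟨T, fun t ht => ht.1⟩
  set t1 := sInf S with ht1def
  have hTt1 : T ≤ t1 := le_csInf hSne fun t ht => ht.1
  have hbound : ∀ k s, c ≤ s → s ≤ t1 → y k s ≤ L k := by
    intro k s hcs hst1
    rcases lt_or_eq_of_le hst1 with hlt | heq
    · rcases le_or_gt s T with hsT | hTs
      · exact past k s hcs hsT
      · by_contra hyk
        push_neg at hyk
        have : t1 ≤ s := csInf_le hbdd ⟨hTs.le, k, hyk⟩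
        linarith
    · rw [heq]
      rcases eq_or_lt_of_le hTt1 with hT1 | hT1
      · exact past k t1 (hcT.trans hTt1) hT1.symm.le
      · have hev : ∀ᶠ u in nhdsWithin t1 (Set.Iio t1), y k u ≤ L k := by
          filter_upwards [Ioo_mem_nhdsLT_of_mem (Set.mem_Ioc.2 ⟨hT1, le_refl t1⟩)] with u hu
          by_contra hyk
          push_neg at hyk
          have : t1 ≤ u := csInf_le hbdd ⟨hu.1.le, k, hyk⟩
          exact absurd this (not_le.2 hu.2)
        have htend : Tendsto (y k) (nhdsWithin t1 (Set.Iio t1)) (nhds (y k t1)) :=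
          ((ycont k).tendsto t1).mono_left nhdsWithin_le_nhds
        exact le_of_tendsto htend hev
  have hct1 : c ≤ t1 := hcT.trans hTt1
  have ht1notS : t1 ∉ S := by
    rintro ⟨-, k, hk⟩
    exact absurd hk (not_lt.2 (hbound k t1 hct1 le_rfl))
  have hfreq : ∃ᶠ t in nhdsWithin t1 (Set.Ioi t1), ∃ k, L k < y k t := by
    rw [Filter.frequently_iff]
    intro U hU
    obtain ⟨u, hu, hsub⟩ := mem_nhdsGT_iff_exists_Ioo_subset.1 hU
    obtain ⟨t, htS, htu⟩ := exists_lt_of_csInf_lt hSne (show sInf S < u from hu)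
    have h1 : t1 ≤ t := csInf_le hbdd htS
    have h2 : t1 < t := lt_of_le_of_ne h1 (by rintro rfl; exact ht1notS htS)
    exact ⟨t, hsub ⟨h2, htu⟩, htS.2⟩
  have hexk : ∃ k, ∃ᶠ t in nhdsWithin t1 (Set.Ioi t1), L k < y k t := by
    by_contra hno
    push_neg at hno
    simp only [← not_lt] at hno
    have hall : ∀ᶠ t in nhdsWithin t1 (Set.Ioi t1), ∀ k, ¬ (L k < y k t) :=
      Filter.eventually_all.2 hno
    obtain ⟨t, h1, k, h2⟩ := (hall.and_frequently hfreq).exists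
    exact h1 k h2
  obtain ⟨k, hkfreq⟩ := hexk
  have hyt1 : y k t1 = L k := by
    refine le_antisymm (hbound k t1 hct1 le_rfl) ?_
    by_contra hlt
    push_neg at hlt
    have hev : ∀ᶠ t in nhds t1, y k t < L k :=
      ((ycont k).tendsto t1).eventually_lt_const hlt
    obtain ⟨t, h1, h2⟩ := (hkfreq.and_eventually (hev.filter_mono nhdsWithin_le_nhds)).exists
    exact absurd h1 (not_lt.2 h2.le)
  obtain ⟨d, hd, hder⟩ := key k t1 hTt1 hyt1 hbound
  have hev2 := deriv_neg_eventually_lt hder hd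
  obtain ⟨t, h1, h2⟩ := (hkfreq.and_eventually hev2).exists
  rw [hyt1] at h2
  exact absurd h1 (not_lt.2 h2.le)


/-- A square real matrix is an M-matrix: off-diagonal entries are nonpositive,
the matrix is invertible and its inverse is entrywise nonnegative. -/
def IsMMatrix {n : ℕ} (M : Matrix (Fin n) (Fin n) ℝ) : Prop :=
  (∀ i j, i ≠ j → M i j ≤ 0) ∧ IsUnit M.det ∧ ∀ i j, 0 ≤ M⁻¹ i j

/-- Theorem 1 (global stability criterion): for the nonlinear nonautonomous delay system
ẋ_i(t) = -a_ii(t)x_i(t) + Σ_{j≠i} a_ij(t)x_j(t) + Σ_j f_ij(t, x_j(h_ij(t))), t ≥ t₀,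
if the diagonal coefficients are bounded below by a_i > 0, the delays are bounded by τ,
and the matrix B with b_ii = a_i − B_ii, b_ij = −A_ij − B_ij (i ≠ j) is an M-matrix
(where A_ij, B_ij bound |a_ij(t)|, |b_ij(t)| on [t₀,∞)), then every solution tends to 0. -/
theorem hahnfeldt_global_stability
    (n : ℕ) (t₀ τ : ℝ) (ht₀ : 0 ≤ t₀) (hτ : 0 < τ)
    (a b : Fin n → Fin n → ℝ → ℝ) (f : Fin n → Fin n → ℝ → ℝ → ℝ)
    (h : Fin n → Fin n → ℝ → ℝ)
    (ameas : ∀ i j, Measurable (a i j)) (bmeas : ∀ i j, Measurable (b i j))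
    (hmeas : ∀ i j, Measurable (h i j))
    (fmeas : ∀ i j u, Measurable (fun t => f i j t u))
    (fcont : ∀ i j t, Continuous (fun u => f i j t u))
    (fbound : ∀ i j t u, |f i j t u| ≤ b i j t * |u|)
    (hdelay : ∀ i j t, h i j t ≤ t ∧ t - h i j t ≤ τ)
    (aLow : Fin n → ℝ) (haLow : ∀ i, 0 < aLow i)
    (hdiag : ∀ i t, t₀ ≤ t → aLow i ≤ a i i t)
    (Abnd Bbnd : Fin n → Fin n → ℝ)
    (hAbnd : ∀ i j t, t₀ ≤ t → |a i j t| ≤ Abnd i j)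
    (hBbnd : ∀ i j t, t₀ ≤ t → |b i j t| ≤ Bbnd i j)
    (hM : IsMMatrix (Matrix.of fun i j =>
        if i = j then aLow i - Bbnd i i else -(Abnd i j) - Bbnd i j))
    (x : Fin n → ℝ → ℝ) (xcont : ∀ i, Continuous (x i))
    (xsol : ∀ i, ∀ t, t₀ ≤ t → HasDerivAt (x i)
        (-(a i i t) * x i t
          + ∑ j ∈ Finset.univ.filter (fun j => j ≠ i), a i j t * x j t
          + ∑ j, f i j t (x j (h i j t))) t) :
    ∀ i, Tendsto (x i) atTop (nhds 0) := by
  intro i₀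
  classical
  set M : Matrix (Fin n) (Fin n) ℝ := Matrix.of fun i j =>
      if i = j then aLow i - Bbnd i i else -(Abnd i j) - Bbnd i j with hMdef
  obtain ⟨hMoff, hMdet, hMinv⟩ := hM
  set ξ : Fin n → ℝ := fun j => ∑ l, M⁻¹ j l with hξdef
  have hξ0 : ∀ j, 0 ≤ ξ j := fun j => Finset.sum_nonneg fun l _ => hMinv j l
  have hMM : M * M⁻¹ = 1 := Matrix.mul_nonsing_inv M hMdet
  have hkeyM : ∀ i, ∑ j, M i j * ξ j = 1 := by
    intro i
    calc ∑ j, M i j * ξ j = ∑ j, ∑ l, M i j * M⁻¹ j l := by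
          simp only [hξdef, Finset.mul_sum]
      _ = ∑ l, ∑ j, M i j * M⁻¹ j l := Finset.sum_comm
      _ = ∑ l, (M * M⁻¹) i l := by
          refine Finset.sum_congr rfl fun l _ => ?_
          rw [Matrix.mul_apply]
      _ = ∑ l, (1 : Matrix (Fin n) (Fin n) ℝ) i l := by rw [hMM]
      _ = 1 := by simp [Matrix.one_apply]
  have hMdiag : ∀ i, M i i = aLow i - Bbnd i i := fun i => by simp [hMdef]
  have hMoffval : ∀ i j, i ≠ j → M i j = -(Abnd i j) - Bbnd i j := fun i j hij => by
    simp [hMdef, hij]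
  have hξpos : ∀ i, 0 < ξ i := by
    intro i
    rcases (hξ0 i).lt_or_eq with hlt | heq
    · exact hlt
    · exfalso
      have h1 : M i i * ξ i + ∑ j ∈ Finset.univ.erase i, M i j * ξ j = 1 :=
        (Finset.add_sum_erase Finset.univ (fun j => M i j * ξ j)
          (Finset.mem_univ i)).trans (hkeyM i)
      have h2 : ∑ j ∈ Finset.univ.erase i, M i j * ξ j ≤ 0 :=
        Finset.sum_nonpos fun j hj =>
          mul_nonpos_iff.2 (Or.inr ⟨hMoff i j (Finset.ne_of_mem_erase hj).symm, hξ0 j⟩)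
      rw [← heq, mul_zero] at h1
      linarith
  have hAbnd0 : ∀ i j, 0 ≤ Abnd i j := fun i j => (abs_nonneg _).trans (hAbnd i j t₀ le_rfl)
  have hBbnd0 : ∀ i j, 0 ≤ Bbnd i j := fun i j => (abs_nonneg _).trans (hBbnd i j t₀ le_rfl)
  set CA : Fin n → ℝ := fun i => ∑ j ∈ Finset.univ.filter (fun j => j ≠ i), Abnd i j * ξ j
    with hCAdef
  set CB : Fin n → ℝ := fun i => ∑ j, Bbnd i j * ξ j with hCBdef
  have hCA0 : ∀ i, 0 ≤ CA i := fun i =>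
    Finset.sum_nonneg fun j _ => mul_nonneg (hAbnd0 i j) (hξ0 j)
  have hCB0 : ∀ i, 0 ≤ CB i := fun i =>
    Finset.sum_nonneg fun j _ => mul_nonneg (hBbnd0 i j) (hξ0 j)
  have hbal : ∀ i, aLow i * ξ i = 1 + (CA i + CB i) := by
    intro i
    have h1 : M i i * ξ i + ∑ j ∈ Finset.univ.erase i, M i j * ξ j = 1 :=
      (Finset.add_sum_erase Finset.univ (fun j => M i j * ξ j)
        (Finset.mem_univ i)).trans (hkeyM i)
    have h2 : ∑ j ∈ Finset.univ.erase i, M i j * ξ j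
        = -(∑ j ∈ Finset.univ.erase i, Abnd i j * ξ j)
          - ∑ j ∈ Finset.univ.erase i, Bbnd i j * ξ j := by
      rw [← Finset.sum_neg_distrib, ← Finset.sum_sub_distrib]
      refine Finset.sum_congr rfl fun j hj => ?_
      rw [hMoffval i j (Finset.ne_of_mem_erase hj).symm]
      ring
    have h3 : CB i = Bbnd i i * ξ i + ∑ j ∈ Finset.univ.erase i, Bbnd i j * ξ j :=
      (Finset.add_sum_erase Finset.univ (fun j => Bbnd i j * ξ j)
        (Finset.mem_univ i)).symm
    have h4 : CA i = ∑ j ∈ Finset.univ.erase i, Abnd i j * ξ j := by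
      rw [hCAdef]
      simp only []
      rw [Finset.filter_ne']
    rw [hMdiag i, h2, ← h4] at h1
    nlinarith [h1, h3]
  have hP1 : ∀ i, 1 ≤ aLow i * ξ i := fun i => by
    have := hbal i; have := hCA0 i; have := hCB0 i; linarith
  have hne : (Finset.univ : Finset (Fin n)).Nonempty := ⟨i₀, Finset.mem_univ i₀⟩
  set ρ : ℝ := Finset.univ.sup' hne (fun i => 1 - 1/(2*(aLow i * ξ i))) with hρdef
  have hρlt1 : ρ < 1 := by
    rw [hρdef, Finset.sup'_lt_iff]
    intro i _
    have h1 : (0:ℝ) < aLow i * ξ i := lt_of_lt_of_le one_pos (hP1 i)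
    have h2 : (0:ℝ) < 1/(2*(aLow i * ξ i)) := by positivity
    linarith
  have hρge : ∀ i, 1 - 1/(2*(aLow i * ξ i)) ≤ ρ := by
    intro i
    rw [hρdef]
    exact Finset.le_sup' (fun i => 1 - 1/(2*(aLow i * ξ i))) (Finset.mem_univ i)
  have hρpos : 0 < ρ := by
    have h1 := hρge i₀
    have h2 := hP1 i₀
    have h3 : 1/(2*(aLow i₀ * ξ i₀)) ≤ 1/2 :=
      one_div_le_one_div_of_le two_pos (by linarith)
    linarith
  -- main derivative estimate
  have hEst : ∀ (K : ℝ), 0 ≤ K → ∀ (i : Fin n) (σ : ℝ), σ = 1 ∨ σ = -1 →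
      ∀ t, t₀ ≤ t → (∀ j s, t - τ ≤ s → s ≤ t → |x j s| ≤ K * ξ j) →
      0 ≤ σ * x i t →
      σ * (-(a i i t) * x i t
          + ∑ j ∈ Finset.univ.filter (fun j => j ≠ i), a i j t * x j t
          + ∑ j, f i j t (x j (h i j t)))
        ≤ -(aLow i * (σ * x i t)) + (CA i + CB i) * K := by
    intro K hK i σ hσ t ht hbd hσx
    have habsσ : |σ| = 1 := by rcases hσ with rfl | rfl <;> simp
    have e1 : σ * (-(a i i t) * x i t) ≤ -(aLow i * (σ * x i t)) := by
      have h1 : aLow i ≤ a i i t := hdiag i t ht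
      have h2 : aLow i * (σ * x i t) ≤ a i i t * (σ * x i t) :=
        mul_le_mul_of_nonneg_right h1 hσx
      have h3 : σ * (-(a i i t) * x i t) = -(a i i t * (σ * x i t)) := by ring
      rw [h3]; linarith
    have e2 : σ * (∑ j ∈ Finset.univ.filter (fun j => j ≠ i), a i j t * x j t) ≤ CA i * K := by
      have h1 : σ * (∑ j ∈ Finset.univ.filter (fun j => j ≠ i), a i j t * x j t)
          ≤ |∑ j ∈ Finset.univ.filter (fun j => j ≠ i), a i j t * x j t| := by
        calc σ * (∑ j ∈ Finset.univ.filter (fun j => j ≠ i), a i j t * x j t)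
            ≤ |σ * (∑ j ∈ Finset.univ.filter (fun j => j ≠ i), a i j t * x j t)| :=
              le_abs_self _
          _ = |∑ j ∈ Finset.univ.filter (fun j => j ≠ i), a i j t * x j t| := by
              rw [abs_mul, habsσ, one_mul]
      refine h1.trans ((Finset.abs_sum_le_sum_abs _ _).trans ?_)
      have h2 : ∀ j ∈ Finset.univ.filter (fun j => j ≠ i),
          |a i j t * x j t| ≤ (Abnd i j * ξ j) * K := by
        intro j _
        rw [abs_mul]
        calc |a i j t| * |x j t| ≤ Abnd i j * (K * ξ j) :=
              mul_le_mul (hAbnd i j t ht) (hbd j t (by linarith) le_rfl)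
                (abs_nonneg _) (hAbnd0 i j)
          _ = (Abnd i j * ξ j) * K := by ring
      calc ∑ j ∈ Finset.univ.filter (fun j => j ≠ i), |a i j t * x j t|
          ≤ ∑ j ∈ Finset.univ.filter (fun j => j ≠ i), (Abnd i j * ξ j) * K :=
            Finset.sum_le_sum h2
        _ = CA i * K := by rw [hCAdef]; simp only []; rw [Finset.sum_mul]
    have e3 : σ * (∑ j, f i j t (x j (h i j t))) ≤ CB i * K := by
      have h1 : σ * (∑ j, f i j t (x j (h i j t))) ≤ |∑ j, f i j t (x j (h i j t))| := by
        calc σ * (∑ j, f i j t (x j (h i j t)))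
            ≤ |σ * (∑ j, f i j t (x j (h i j t)))| := le_abs_self _
          _ = |∑ j, f i j t (x j (h i j t))| := by rw [abs_mul, habsσ, one_mul]
      refine h1.trans ((Finset.abs_sum_le_sum_abs _ _).trans ?_)
      have h2 : ∀ j ∈ (Finset.univ : Finset (Fin n)),
          |f i j t (x j (h i j t))| ≤ (Bbnd i j * ξ j) * K := by
        intro j _
        have hb1 := fbound i j t (x j (h i j t))
        have hb2 : b i j t ≤ Bbnd i j := (le_abs_self _).trans (hBbnd i j t ht)
        have hdel := hdelay i j t
        have hu : |x j (h i j t)| ≤ K * ξ j := hbd j (h i j t) (by linarith [hdel.2]) hdel.1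
        calc |f i j t (x j (h i j t))| ≤ b i j t * |x j (h i j t)| := hb1
          _ ≤ Bbnd i j * (K * ξ j) := mul_le_mul hb2 hu (abs_nonneg _) (hBbnd0 i j)
          _ = (Bbnd i j * ξ j) * K := by ring
      calc ∑ j, |f i j t (x j (h i j t))| ≤ ∑ j, (Bbnd i j * ξ j) * K :=
            Finset.sum_le_sum h2
        _ = CB i * K := by rw [hCBdef]; simp only []; rw [Finset.sum_mul]
    have hsplit : σ * (-(a i i t) * x i t
          + ∑ j ∈ Finset.univ.filter (fun j => j ≠ i), a i j t * x j t
          + ∑ j, f i j t (x j (h i j t)))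
        = σ * (-(a i i t) * x i t)
          + σ * (∑ j ∈ Finset.univ.filter (fun j => j ≠ i), a i j t * x j t)
          + σ * (∑ j, f i j t (x j (h i j t))) := by ring
    have hfin : (CA i + CB i) * K = CA i * K + CB i * K := by ring
    rw [hsplit]
    linarith
  -- Lemma A: invariance of the box
  have lemA : ∀ K, 0 < K → (∀ j s, t₀ - τ ≤ s → s ≤ t₀ → |x j s| ≤ K * ξ j) →
      ∀ j t, t₀ - τ ≤ t → |x j t| ≤ K * ξ j := by
    intro K hK hpast j t hct
    have main := first_crossing (ι := Fin n × Bool)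
      (fun p s => (if p.2 then (1:ℝ) else -1) * x p.1 s)
      (fun p => K * ξ p.1) (t₀ - τ) t₀ (by linarith)
      (fun p => continuous_const.mul (xcont p.1))
      (by
        rintro ⟨p1, p2⟩ s hcs hsT
        have h1 := hpast p1 s hcs hsT
        have h2 : x p1 s ≤ |x p1 s| := le_abs_self _
        have h3 : -(x p1 s) ≤ |x p1 s| := neg_le_abs _
        cases p2 <;> simp <;> linarith)
      (by
        rintro ⟨p1, p2⟩ t hTt hyt hpb
        have hσ : (if p2 then (1:ℝ) else -1) = 1 ∨ (if p2 then (1:ℝ) else -1) = -1 := by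
          cases p2 <;> simp
        set σ : ℝ := if p2 then (1:ℝ) else -1 with hσdef
        have hbd : ∀ j' s, t - τ ≤ s → s ≤ t → |x j' s| ≤ K * ξ j' := by
          intro j' s hs1 hs2
          have ha := hpb (j', true) s (by linarith) hs2
          have hb := hpb (j', false) s (by linarith) hs2
          simp at ha hb
          rw [abs_le]
          constructor <;> linarith
        have hσx : σ * x p1 t = K * ξ p1 := hyt
        have hest := hEst K hK.le p1 σ hσ t hTt hbd
          (by rw [hσx]; exact (mul_pos hK (hξpos p1)).le)
        rw [hσx] at hest
        have he : -(aLow p1 * (K * ξ p1)) + (CA p1 + CB p1) * K = -K := by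
          linear_combination (-K) * (hbal p1)
        refine ⟨_, ?_, (xsol p1 t hTt).const_mul σ⟩
        calc σ * (-(a p1 p1 t) * x p1 t
              + ∑ j ∈ Finset.univ.filter (fun j => j ≠ p1), a p1 j t * x j t
              + ∑ j, f p1 j t (x j (h p1 j t)))
            ≤ -(aLow p1 * (K * ξ p1)) + (CA p1 + CB p1) * K := hest
          _ = -K := he
          _ < 0 := by linarith)
    have h1 := main (j, true) t hct
    have h2 := main (j, false) t hct
    simp at h1 h2
    rw [abs_le]
    constructor <;> linarith
  -- Lemma D: decay step for one coordinate and one sign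
  have lemD : ∀ K, 0 < K → ∀ T1, t₀ ≤ T1 → (∀ j s, T1 - τ ≤ s → |x j s| ≤ K * ξ j) →
      ∀ (i : Fin n) (σ : ℝ), σ = 1 ∨ σ = -1 →
      ∃ t2, T1 ≤ t2 ∧ ∀ t, t2 ≤ t → σ * x i t ≤ ρ * K * ξ i := by
    intro K hK T1 hT1 hgb i σ hσ
    have hbd : ∀ t, T1 ≤ t → ∀ j s, t - τ ≤ s → s ≤ t → |x j s| ≤ K * ξ j :=
      fun t ht j s hs1 _ => hgb j s (by linarith)
    have hPpos : (0:ℝ) < aLow i * ξ i := lt_of_lt_of_le one_pos (hP1 i)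
    have hhalf : aLow i * ξ i * (1 - ρ) ≤ 1/2 := by
      have h1 := hρge i
      have h3 : aLow i * ξ i * (1 - ρ) ≤ aLow i * ξ i * (1/(2*(aLow i * ξ i))) :=
        mul_le_mul_of_nonneg_left (by linarith) hPpos.le
      have h4 : aLow i * ξ i * (1/(2*(aLow i * ξ i))) = 1/2 := by
        have := (haLow i).ne'
        have := (hξpos i).ne'
        field_simp
      linarith
    have hder : ∀ t, T1 ≤ t → ρ * K * ξ i ≤ σ * x i t →
        σ * (-(a i i t) * x i t
          + ∑ j ∈ Finset.univ.filter (fun j => j ≠ i), a i j t * x j t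
          + ∑ j, f i j t (x j (h i j t))) ≤ -(K/2) := by
      intro t ht hlev
      have h0 : (0:ℝ) ≤ ρ * K * ξ i :=
        mul_nonneg (mul_nonneg hρpos.le hK.le) (hξpos i).le
      have hest := hEst K hK.le i σ hσ t (hT1.trans ht) (hbd t ht) (h0.trans hlev)
      have h1 : aLow i * (ρ * K * ξ i) ≤ aLow i * (σ * x i t) :=
        mul_le_mul_of_nonneg_left hlev (haLow i).le
      have h2 := mul_le_mul_of_nonneg_left hhalf hK.le
      nlinarith [hest, h1, h2, hbal i]
    have hT1T2 : T1 ≤ T1 + 2*ξ i + 1 := by nlinarith [hξpos i]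
    have hstep : ∃ t2, T1 ≤ t2 ∧ σ * x i t2 ≤ ρ * K * ξ i := by
      by_contra hno
      push_neg at hno
      have hfa : ∀ t, T1 ≤ t → ρ * K * ξ i < σ * x i t := by
        intro t ht
        exact hno t ht
      have hdec := decay_est (f := fun s => σ * x i s) (δ := K/2) hT1T2 (by
        intro t htmem
        refine ⟨_, hder t htmem.1 (hfa t htmem.1).le, (xsol i t (hT1.trans htmem.1)).const_mul σ⟩)
      have hb1 : σ * x i T1 ≤ K * ξ i := by
        have hx1 := hgb i T1 (by linarith)
        have h2 : σ * x i T1 ≤ |σ * x i T1| := le_abs_self _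
        have habsσ : |σ| = 1 := by rcases hσ with rfl | rfl <;> simp
        rw [abs_mul, habsσ, one_mul] at h2
        linarith
      have hlast := hfa (T1 + 2*ξ i + 1) hT1T2
      have h0 : 0 < ρ * K * ξ i :=
        mul_pos (mul_pos hρpos hK) (hξpos i)
      nlinarith [hdec, hb1, hlast, h0, hK]
    obtain ⟨t2, ht2a, ht2v⟩ := hstep
    refine ⟨t2, ht2a, ?_⟩
    have main := first_crossing (ι := Unit) (fun _ s => σ * x i s) (fun _ => ρ * K * ξ i)
      t2 t2 le_rfl (fun _ => continuous_const.mul (xcont i))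
      (by
        intro _ s hs1 hs2
        have : s = t2 := le_antisymm hs2 hs1
        rw [this]; exact ht2v)
      (by
        rintro _ t htt2 hyt -
        have ht0t : t₀ ≤ t := hT1.trans (ht2a.trans htt2)
        refine ⟨_, ?_, (xsol i t ht0t).const_mul σ⟩
        have := hder t (ht2a.trans htt2) (le_of_eq hyt.symm)
        calc σ * (-(a i i t) * x i t
              + ∑ j ∈ Finset.univ.filter (fun j => j ≠ i), a i j t * x j t
              + ∑ j, f i j t (x j (h i j t)))
            ≤ -(K/2) := this
          _ < 0 := by linarith)
    exact fun t ht => main Unit.unit t ht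
  -- Lemma B: uniform contraction step
  have lemB : ∀ K, 0 < K → ∀ T1, t₀ ≤ T1 → (∀ j s, T1 - τ ≤ s → |x j s| ≤ K * ξ j) →
      ∃ T', t₀ ≤ T' ∧ ∀ j s, T' - τ ≤ s → |x j s| ≤ ρ * K * ξ j := by
    intro K hK T1 hT1 hgb
    have h1 := fun i => lemD K hK T1 hT1 hgb i 1 (Or.inl rfl)
    have h2 := fun i => lemD K hK T1 hT1 hgb i (-1) (Or.inr rfl)
    choose Tp hTp1 hTp2 using h1
    choose Tn hTn1 hTn2 using h2
    refine ⟨(Finset.univ.sup' hne fun i => max (Tp i) (Tn i)) + τ, ?_, ?_⟩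
    · have h3 := hTp1 i₀
      have h4 : max (Tp i₀) (Tn i₀) ≤ Finset.univ.sup' hne fun i => max (Tp i) (Tn i) :=
        Finset.le_sup' (fun i => max (Tp i) (Tn i)) (Finset.mem_univ i₀)
      have h5 : Tp i₀ ≤ max (Tp i₀) (Tn i₀) := le_max_left _ _
      linarith
    · intro j s hs
      have h4 : max (Tp j) (Tn j) ≤ Finset.univ.sup' hne fun i => max (Tp i) (Tn i) :=
        Finset.le_sup' (fun i => max (Tp i) (Tn i)) (Finset.mem_univ j)
      have h5 : Tp j ≤ max (Tp j) (Tn j) := le_max_left _ _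
      have h6 : Tn j ≤ max (Tp j) (Tn j) := le_max_right _ _
      have hp := hTp2 j s (by simp only [add_sub_cancel_right] at hs; linarith)
      have hn := hTn2 j s (by simp only [add_sub_cancel_right] at hs; linarith)
      rw [abs_le]
      constructor <;> [linarith; linarith]
  -- initial bound on the initial segment
  obtain ⟨C, hC⟩ : ∃ C, ∀ j, ∀ s, t₀ - τ ≤ s → s ≤ t₀ → |x j s| ≤ C := by
    have h1 : ∀ j : Fin n, ∃ Cj, ∀ s ∈ Set.Icc (t₀ - τ) t₀, |x j s| ≤ Cj := by
      intro j
      obtain ⟨Cj, hCj⟩ := isCompact_Icc.exists_bound_of_continuousOn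
        (s := Set.Icc (t₀ - τ) t₀) (xcont j).continuousOn
      exact ⟨Cj, fun s hs => hCj s hs⟩
    choose Cf hCf using h1
    refine ⟨Finset.univ.sup' hne Cf, fun j s hs1 hs2 => ?_⟩
    exact (hCf j s ⟨hs1, hs2⟩).trans (Finset.le_sup' Cf (Finset.mem_univ j))
  have hC0 : 0 ≤ C := (abs_nonneg _).trans (hC i₀ t₀ (by linarith) le_rfl)
  set ξmin := Finset.univ.inf' hne ξ with hξmindef
  have hξminpos : 0 < ξmin := by
    rw [hξmindef, Finset.lt_inf'_iff]
    exact fun i _ => hξpos i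
  set K0 := C / ξmin + 1 with hK0def
  have hK0pos : 0 < K0 := by
    have := div_nonneg hC0 hξminpos.le
    rw [hK0def]; linarith
  have hinit : ∀ j s, t₀ - τ ≤ s → s ≤ t₀ → |x j s| ≤ K0 * ξ j := by
    intro j s hs1 hs2
    have h3 := hC j s hs1 hs2
    have h5 : ξmin ≤ ξ j := by
      rw [hξmindef]; exact Finset.inf'_le ξ (Finset.mem_univ j)
    have h6 : C / ξmin * ξmin = C := div_mul_cancel₀ C hξminpos.ne'
    have h7 : C / ξmin * ξmin ≤ C / ξmin * ξ j :=
      mul_le_mul_of_nonneg_left h5 (div_nonneg hC0 hξminpos.le)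
    have h8 : 0 < ξ j := hξpos j
    have h9 : C ≤ K0 * ξ j := by rw [hK0def]; nlinarith
    linarith
  have hglob0 : ∀ j s, t₀ - τ ≤ s → |x j s| ≤ K0 * ξ j := fun j s hs =>
    lemA K0 hK0pos hinit j s hs
  -- iteration
  have hiter : ∀ m : ℕ, ∃ T1, t₀ ≤ T1 ∧ ∀ j s, T1 - τ ≤ s → |x j s| ≤ ρ^m * K0 * ξ j := by
    intro m
    induction m with
    | zero => exact ⟨t₀, le_rfl, by simpa using hglob0⟩
    | succ m ih =>
      obtain ⟨T1, hT1, hbd⟩ := ih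
      have hKm : 0 < ρ^m * K0 := mul_pos (pow_pos hρpos m) hK0pos
      obtain ⟨T', hT', hbd'⟩ := lemB (ρ^m * K0) hKm T1 hT1 hbd
      refine ⟨T', hT', fun j s hs => ?_⟩
      calc |x j s| ≤ ρ * (ρ^m * K0) * ξ j := hbd' j s hs
        _ = ρ^(m+1) * K0 * ξ j := by ring
  -- conclusion
  rw [NormedAddCommGroup.tendsto_nhds_zero]
  intro ε hε
  have htend : Tendsto (fun m : ℕ => ρ^m * K0 * ξ i₀) atTop (nhds 0) := by
    have h1 := tendsto_pow_atTop_nhds_zero_of_lt_one hρpos.le hρlt1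
    have h3 := (h1.mul_const K0).mul_const (ξ i₀)
    simpa using h3
  obtain ⟨m, hm⟩ := (htend.eventually_lt_const hε).exists
  obtain ⟨T1, hT1, hbd⟩ := hiter m
  filter_upwards [eventually_ge_atTop T1] with t ht
  have hb := hbd i₀ t (by linarith)
  calc ‖x i₀ t‖ = |x i₀ t| := rfl
    _ ≤ ρ^m * K0 * ξ i₀ := hb
    _ < ε := hm
end

section
/- Let α, β, γ, δ, p₀, c₀ > 0 and set η = βe^{−p₀/α}. If β > (γ + c₀)e^{p₀/α}, then the algebraic system αx·ln(K/x) − p₀x = 0, βx − γK − δx^{2/3}K − c₀K = 0 has a unique solution with x > 0 and K > 0, given explicitly by x* = ((η − γ − c₀)/δ)^{3/2} and K* = x* e^{p₀/α}. -/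
open Real

/-- The equilibrium system of Model 1 with constant treatment rates,
αx ln(K/x) − p₀x = 0, βx − γK − δx^{2/3}K − c₀K = 0, has a unique positive solution,
given by x* = ((η − γ − c₀)/δ)^{3/2}, K* = x* e^{p₀/α} with η = βe^{−p₀/α},
provided β > (γ + c₀)e^{p₀/α}. -/
theorem model1_unique_positive_equilibrium
    (α β γ δ p₀ c₀ : ℝ) (hα : 0 < α) (hβ : 0 < β) (hγ : 0 < γ) (hδ : 0 < δ)
    (hp₀ : 0 < p₀) (hc₀ : 0 < c₀)
    (hcond : β > (γ + c₀) * Real.exp (p₀ / α)) :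
    let η := β * Real.exp (-(p₀ / α))
    let xstar := ((η - γ - c₀) / δ) ^ ((3:ℝ)/2)
    let Kstar := xstar * Real.exp (p₀ / α)
    (0 < xstar ∧ 0 < Kstar ∧
      α * xstar * Real.log (Kstar / xstar) - p₀ * xstar = 0 ∧
      β * xstar - γ * Kstar - δ * xstar ^ ((2:ℝ)/3) * Kstar - c₀ * Kstar = 0) ∧
    (∀ x K : ℝ, 0 < x → 0 < K →
      α * x * Real.log (K / x) - p₀ * x = 0 →
      β * x - γ * K - δ * x ^ ((2:ℝ)/3) * K - c₀ * K = 0 →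
      x = xstar ∧ K = Kstar) := by
  intro η xstar Kstar
  have hE : 0 < Real.exp (p₀ / α) := Real.exp_pos _
  have hee : Real.exp (-(p₀ / α)) * Real.exp (p₀ / α) = 1 := by
    rw [← Real.exp_add]; simp
  have hη : (0:ℝ) < β * Real.exp (-(p₀ / α)) - γ - c₀ := by
    nlinarith [mul_lt_mul_of_pos_right hcond (Real.exp_pos (-(p₀ / α))), hee]
  have hη' : η - γ - c₀ = β * Real.exp (-(p₀ / α)) - γ - c₀ := rfl
  have ht : 0 < (η - γ - c₀) / δ := div_pos (by rw [hη']; exact hη) hδ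
  have hx : 0 < xstar := Real.rpow_pos_of_pos ht _
  have hK : 0 < Kstar := mul_pos hx hE
  have hlog : Real.log (Kstar / xstar) = p₀ / α := by
    have : Kstar / xstar = Real.exp (p₀ / α) := by
      field_simp [Kstar]
      rfl
    rw [this, Real.log_exp]
  have hx23 : xstar ^ ((2:ℝ)/3) = (η - γ - c₀) / δ := by
    rw [show xstar = ((η - γ - c₀) / δ) ^ ((3:ℝ)/2) from rfl,
      ← Real.rpow_mul ht.le]
    norm_num
  constructor
  · refine ⟨hx, hK, ?_, ?_⟩
    · rw [hlog]; field_simp; ring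
    · rw [show Kstar = xstar * Real.exp (p₀ / α) from rfl, hx23, hη']
      have hd : δ * ((β * Real.exp (-(p₀ / α)) - γ - c₀) / δ) =
          β * Real.exp (-(p₀ / α)) - γ - c₀ := by field_simp
      rw [hd]
      linear_combination (-(β * xstar)) * hee
  · intro x K hx0 hK0 h1 h2
    have hlogK : Real.log (K / x) = p₀ / α := by
      have hne : α * x ≠ 0 := by positivity
      have : α * x * (Real.log (K / x) - p₀ / α) = 0 := by
        field_simp
        nlinarith [h1]
      rcases mul_eq_zero.1 this with h | h
      · exact absurd h hne
      · linarith
    have hKx : K = x * Real.exp (p₀ / α) := by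
      have : K / x = Real.exp (p₀ / α) := by
        rw [← hlogK, Real.exp_log (div_pos hK0 hx0)]
      field_simp at this
      linarith [this]
    have h23 : x ^ ((2:ℝ)/3) = (η - γ - c₀) / δ := by
      rw [hKx] at h2
      have key : x * (β - (γ + c₀ + δ * x ^ ((2:ℝ)/3)) * Real.exp (p₀ / α)) = 0 := by
        linear_combination h2
      have h3 : β - (γ + c₀ + δ * x ^ ((2:ℝ)/3)) * Real.exp (p₀ / α) = 0 := by
        rcases mul_eq_zero.1 key with h | h
        · exact absurd h hx0.ne'
        · exact h
      have hβe : β * Real.exp (-(p₀ / α)) = γ + c₀ + δ * x ^ ((2:ℝ)/3) := by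
        linear_combination Real.exp (-(p₀ / α)) * h3 +
          (γ + c₀ + δ * x ^ ((2:ℝ)/3)) * hee
      rw [hη', hβe]
      field_simp
      ring
    have hxeq : x = xstar := by
      have h' : (x ^ ((2:ℝ)/3)) ^ ((3:ℝ)/2) = xstar := by rw [h23]
      rw [← Real.rpow_mul hx0.le] at h'
      norm_num at h'
      exact h'
    exact ⟨hxeq, by rw [show Kstar = xstar * Real.exp (p₀ / α) from rfl, ← hxeq, hKx]⟩
end

section
/- Consider Model 1 with constant treatment rates: dx/dt = αx(t)ln(K(t)/x(t)) − p₀x(t), dK/dt = βx(h(t)) − γK(t) − δx^{2/3}(h(t))K(t) − c₀K(t), with α, β, γ, δ, p₀, c₀ > 0 and h(t) ≤ t measurable with t − h(t) ≤ τ. If β > (γ + c₀)e^{p₀/α}, then the positive equilibrium (x*, K*) = (((η − γ − c₀)/δ)^{3/2}, x* e^{p₀/α}), where η = βe^{−p₀/α}, is locally asymptotically stable. -/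
open Real Filter Set Topology

namespace Model1Theorem3

/-- comparison: if `f' = g` on `[a,b]` and `g ≤ -m` inside, then `f` decreases at rate `m`. -/
lemma bar_aux {f g : ℝ → ℝ} {m a b : ℝ} (hab : a ≤ b)
    (hd : ∀ t ∈ Set.Icc a b, HasDerivAt f (g t) t)
    (hneg : ∀ t ∈ Set.Ioo a b, g t + m ≤ 0) :
    f b + m * b ≤ f a + m * a := by
  have hF : ∀ t ∈ Set.Icc a b, HasDerivAt (fun s => f s + m * s) (g t + m) t := by
    intro t ht
    exact ((hd t ht).add ((hasDerivAt_id t).const_mul m)).congr_deriv (by simp)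
  have hanti : AntitoneOn (fun s => f s + m * s) (Set.Icc a b) := by
    apply antitoneOn_of_deriv_nonpos (convex_Icc a b)
    · exact fun t ht => ((hF t ht).continuousAt).continuousWithinAt
    · intro t ht
      rw [interior_Icc] at ht
      exact ((hF t (Set.Ioo_subset_Icc_self ht)).differentiableAt).differentiableWithinAt
    · intro t ht
      rw [interior_Icc] at ht
      rw [(hF t (Set.Ioo_subset_Icc_self ht)).deriv]
      exact hneg t ht
  exact hanti (Set.left_mem_Icc.2 hab) (Set.right_mem_Icc.2 hab) hab

/-- Barrier lemma: if whenever `f > M` (for `t ≥ T₁`) the derivative is ≤ -m < 0,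
then eventually `f ≤ M`. -/
lemma bar {f g : ℝ → ℝ} {T₁ M m : ℝ} (hm : 0 < m)
    (hd : ∀ t, T₁ ≤ t → HasDerivAt f (g t) t)
    (hg : ∀ t, T₁ ≤ t → M < f t → g t ≤ -m) :
    ∀ᶠ t in atTop, f t ≤ M := by
  have ha : ∃ t₂, T₁ ≤ t₂ ∧ f t₂ ≤ M := by
    by_contra hcon
    push_neg at hcon
    set b := T₁ + (f T₁ - M) / m + 1 with hb
    have h0 : 0 ≤ (f T₁ - M) / m := div_nonneg (by linarith [hcon T₁ le_rfl]) hm.le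
    have hTb : T₁ ≤ b := by simp only [hb]; linarith
    have hcomp := bar_aux (f := f) (g := g) (m := m) hTb
      (fun t ht => hd t ht.1) (fun t ht => by
        have := hg t ht.1.le (hcon t ht.1.le); linarith)
    have hfb : M < f b := hcon b hTb
    have hmb : m * b = m * T₁ + (f T₁ - M) + m := by
      simp only [hb]; field_simp
    nlinarith
  obtain ⟨t₂, ht₂, hft₂⟩ := ha
  rw [eventually_atTop]
  refine ⟨t₂, fun t₃ ht₃ => ?_⟩
  by_contra hf3
  push_neg at hf3
  set S := Set.Icc t₂ t₃ ∩ f ⁻¹' Set.Iic M with hS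
  have hne : S.Nonempty := ⟨t₂, ⟨le_rfl, ht₃⟩, hft₂⟩
  have hcont : ContinuousOn f (Set.Icc t₂ t₃) := fun t ht =>
    ((hd t (le_trans ht₂ ht.1)).continuousAt).continuousWithinAt
  have hcl : IsClosed S := hcont.preimage_isClosed_of_isClosed isClosed_Icc isClosed_Iic
  have hcomp : IsCompact S := isCompact_Icc.of_isClosed_subset hcl Set.inter_subset_left
  set s₀ := sSup S with hs₀def
  have hs₀ : s₀ ∈ S := hcomp.sSup_mem hne
  have hs₀t₃ : s₀ ≤ t₃ := hs₀.1.2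
  have hs₀lt : s₀ < t₃ := lt_of_le_of_ne hs₀t₃ (by
    intro hcontra
    exact absurd hs₀.2 (by simp [hcontra, not_le.2 hf3]))
  have hgt : ∀ t ∈ Set.Ioo s₀ t₃, M < f t := by
    intro t ht
    by_contra hle
    push_neg at hle
    have htS : t ∈ S := ⟨⟨le_trans hs₀.1.1 ht.1.le, ht.2.le⟩, hle⟩
    exact absurd (le_csSup hcomp.bddAbove htS) (not_le.2 ht.1)
  have hcomp2 := bar_aux (f := f) (g := g) (m := m) hs₀lt.le
    (fun t ht => hd t (le_trans ht₂ (le_trans hs₀.1.1 ht.1)))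
    (fun t ht => by
      have := hg t (le_trans ht₂ (le_trans hs₀.1.1 ht.1.le)) (hgt t ht)
      linarith)
  have hfs : f s₀ ≤ M := hs₀.2
  have hpos : 0 < m * (t₃ - s₀) := mul_pos hm (sub_pos.2 hs₀lt)
  have : f t₃ ≤ M := by nlinarith
  exact absurd this (not_le.2 hf3)


variable {Γ δ β : ℝ}

lemma cube_split {a : ℝ} (ha : 0 < a) : a ^ ((1:ℝ)/3) * a ^ ((2:ℝ)/3) = a := by
  rw [← Real.rpow_add ha]
  norm_num

/-- Cross-multiplied monotonicity of `a ↦ β a / (Γ + δ a^{2/3})`. -/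
lemma phi_mono (hΓ : 0 < Γ) (hδ : 0 < δ) (hβ : 0 < β) {b a : ℝ}
    (hb : 0 < b) (hba : b ≤ a) :
    β * b * (Γ + δ * a ^ ((2:ℝ)/3)) ≤ β * a * (Γ + δ * b ^ ((2:ℝ)/3)) := by
  have ha : 0 < a := lt_of_lt_of_le hb hba
  have h13 : b ^ ((1:ℝ)/3) ≤ a ^ ((1:ℝ)/3) := Real.rpow_le_rpow hb.le hba (by norm_num)
  have hb23 : (0:ℝ) < b ^ ((2:ℝ)/3) := Real.rpow_pos_of_pos hb _
  have ha23 : (0:ℝ) < a ^ ((2:ℝ)/3) := Real.rpow_pos_of_pos ha _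
  have hsa := cube_split ha
  have hsb := cube_split hb
  have e1 : a * b ^ ((2:ℝ)/3) - b * a ^ ((2:ℝ)/3)
      = a ^ ((2:ℝ)/3) * b ^ ((2:ℝ)/3) * (a ^ ((1:ℝ)/3) - b ^ ((1:ℝ)/3)) := by
    nth_rewrite 1 [← hsa]
    nth_rewrite 2 [← hsb]
    ring
  nlinarith [e1, mul_nonneg (mul_nonneg ha23.le hb23.le) (sub_nonneg.2 h13),
    mul_pos hβ hδ, mul_pos hβ hΓ, hba]

/-- If `0 < a ≤ A` and `K ≥ Φ(A) + ε` then the K-derivative is `≤ -Γ ε`. -/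
lemma key_up (hΓ : 0 < Γ) (hδ : 0 < δ) (hβ : 0 < β) {a A Kv ε : ℝ}
    (ha : 0 < a) (haA : a ≤ A) (hε : 0 ≤ ε)
    (hK : β * A / (Γ + δ * A ^ ((2:ℝ)/3)) + ε ≤ Kv) :
    β * a - Γ * Kv - δ * a ^ ((2:ℝ)/3) * Kv ≤ -(Γ * ε) := by
  have hA : 0 < A := lt_of_lt_of_le ha haA
  have hdA : 0 < Γ + δ * A ^ ((2:ℝ)/3) := by positivity
  have hda : 0 < Γ + δ * a ^ ((2:ℝ)/3) := by positivity
  have h1 : β * A ≤ (Γ + δ * A ^ ((2:ℝ)/3)) * (Kv - ε) := by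
    rw [div_add' _ _ _ hdA.ne', div_le_iff₀ hdA] at hK
    nlinarith
  have h2 := phi_mono hΓ hδ hβ ha haA
  have h3 : β * a * (Γ + δ * A ^ ((2:ℝ)/3)) ≤
      (Γ + δ * A ^ ((2:ℝ)/3)) * (Kv - ε) * (Γ + δ * a ^ ((2:ℝ)/3)) := by
    calc β * a * (Γ + δ * A ^ ((2:ℝ)/3)) ≤ β * A * (Γ + δ * a ^ ((2:ℝ)/3)) := h2
    _ ≤ (Γ + δ * A ^ ((2:ℝ)/3)) * (Kv - ε) * (Γ + δ * a ^ ((2:ℝ)/3)) := by nlinarith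
  have h4 : β * a ≤ (Kv - ε) * (Γ + δ * a ^ ((2:ℝ)/3)) := by
    have := (mul_le_mul_iff_of_pos_right hdA).mp (by linarith [h3] : β * a * (Γ + δ * A ^ ((2:ℝ)/3)) ≤ ((Kv - ε) * (Γ + δ * a ^ ((2:ℝ)/3))) * (Γ + δ * A ^ ((2:ℝ)/3)))
    exact this
  have ha23 : (0:ℝ) < a ^ ((2:ℝ)/3) := Real.rpow_pos_of_pos ha _
  nlinarith [h4, mul_nonneg hε (mul_pos hδ ha23).le]

/-- If `0 < B ≤ a` and `K ≤ Φ(B) - ε` then the K-derivative is `≥ Γ ε`. -/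
lemma key_down (hΓ : 0 < Γ) (hδ : 0 < δ) (hβ : 0 < β) {a B Kv ε : ℝ}
    (hB : 0 < B) (hBa : B ≤ a) (hε : 0 ≤ ε)
    (hK : Kv + ε ≤ β * B / (Γ + δ * B ^ ((2:ℝ)/3))) :
    Γ * ε ≤ β * a - Γ * Kv - δ * a ^ ((2:ℝ)/3) * Kv := by
  have ha : 0 < a := lt_of_lt_of_le hB hBa
  have hdB : 0 < Γ + δ * B ^ ((2:ℝ)/3) := by positivity
  have hda : 0 < Γ + δ * a ^ ((2:ℝ)/3) := by positivity
  have h1 : (Kv + ε) * (Γ + δ * B ^ ((2:ℝ)/3)) ≤ β * B := by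
    rw [le_div_iff₀ hdB] at hK
    linarith
  have h2 := phi_mono hΓ hδ hβ hB hBa
  have h3 : (Kv + ε) * (Γ + δ * B ^ ((2:ℝ)/3)) * (Γ + δ * a ^ ((2:ℝ)/3)) ≤
      β * a * (Γ + δ * B ^ ((2:ℝ)/3)) := by nlinarith
  have h4 : (Kv + ε) * (Γ + δ * a ^ ((2:ℝ)/3)) ≤ β * a := by
    have h5 : (Kv + ε) * (Γ + δ * a ^ ((2:ℝ)/3)) * (Γ + δ * B ^ ((2:ℝ)/3)) ≤ β * a * (Γ + δ * B ^ ((2:ℝ)/3)) := by linarith [h3]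
    exact (mul_le_mul_iff_of_pos_right hdB).mp h5
  have ha23' : (0:ℝ) < a ^ ((2:ℝ)/3) := Real.rpow_pos_of_pos ha _
  nlinarith [h4, mul_nonneg hε (mul_pos hδ ha23').le]

/-- scaling: `Φ(c a) ≤ c Φ(a)` for `c ≥ 1`, strict for `c > 1`. -/
lemma phi_scale_up (hΓ : 0 < Γ) (hδ : 0 < δ) (hβ : 0 < β) {a c : ℝ}
    (ha : 0 < a) (hc : 1 < c) :
    β * (c * a) / (Γ + δ * (c * a) ^ ((2:ℝ)/3)) < c * (β * a / (Γ + δ * a ^ ((2:ℝ)/3))) := by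
  have hc0 : (0:ℝ) < c := lt_trans one_pos hc
  have hmul : (c * a) ^ ((2:ℝ)/3) = c ^ ((2:ℝ)/3) * a ^ ((2:ℝ)/3) :=
    Real.mul_rpow hc0.le ha.le
  have hc23 : 1 < c ^ ((2:ℝ)/3) := Real.one_lt_rpow_iff_of_pos hc0 |>.mpr (Or.inl ⟨hc, by norm_num⟩)
  have ha23 : (0:ℝ) < a ^ ((2:ℝ)/3) := Real.rpow_pos_of_pos ha _
  have hd1 : 0 < Γ + δ * (c * a) ^ ((2:ℝ)/3) := by
    rw [hmul]; positivity
  have hd2 : 0 < Γ + δ * a ^ ((2:ℝ)/3) := by positivity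
  rw [div_lt_iff₀ hd1, mul_comm c (β * a / _), div_mul_eq_mul_div, div_mul_eq_mul_div,
    lt_div_iff₀ hd2, hmul]
  nlinarith [mul_pos (mul_pos (mul_pos (mul_pos hβ ha) hc0) (mul_pos hδ ha23)) (sub_pos.2 hc23)]

/-- scaling: `Φ(c a) > c Φ(a)` for `0 < c < 1`. -/
lemma phi_scale_down (hΓ : 0 < Γ) (hδ : 0 < δ) (hβ : 0 < β) {a c : ℝ}
    (ha : 0 < a) (hc0 : 0 < c) (hc : c < 1) :
    c * (β * a / (Γ + δ * a ^ ((2:ℝ)/3))) < β * (c * a) / (Γ + δ * (c * a) ^ ((2:ℝ)/3)) := by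
  have hmul : (c * a) ^ ((2:ℝ)/3) = c ^ ((2:ℝ)/3) * a ^ ((2:ℝ)/3) :=
    Real.mul_rpow hc0.le ha.le
  have hc23 : c ^ ((2:ℝ)/3) < 1 := by
    apply Real.rpow_lt_one hc0.le hc (by norm_num)
  have hc23p : (0:ℝ) < c ^ ((2:ℝ)/3) := Real.rpow_pos_of_pos hc0 _
  have ha23 : (0:ℝ) < a ^ ((2:ℝ)/3) := Real.rpow_pos_of_pos ha _
  have hd1 : 0 < Γ + δ * (c * a) ^ ((2:ℝ)/3) := by
    rw [hmul]; positivity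
  have hd2 : 0 < Γ + δ * a ^ ((2:ℝ)/3) := by positivity
  rw [lt_div_iff₀ hd1, mul_comm c (β * a / _), div_mul_eq_mul_div, div_mul_eq_mul_div,
    div_lt_iff₀ hd2, hmul]
  nlinarith [mul_pos (mul_pos (mul_pos (mul_pos hβ ha) hc0) (mul_pos hδ ha23)) (sub_pos.2 hc23)]


lemma lt_exp_bound {y xs r : ℝ} (hxs : 0 < xs) (hy : 0 < y)
    (hlog : Real.log y < Real.log xs + r) : y < xs * Real.exp r := by
  calc y = Real.exp (Real.log y) := (Real.exp_log hy).symm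
  _ < Real.exp (Real.log xs + r) := Real.exp_lt_exp.2 hlog
  _ = xs * Real.exp r := by rw [Real.exp_add, Real.exp_log hxs]

lemma gt_exp_bound {y xs r : ℝ} (hxs : 0 < xs) (hy : 0 < y)
    (hlog : Real.log xs - r < Real.log y) : xs * Real.exp (-r) < y := by
  calc xs * Real.exp (-r) = Real.exp (Real.log xs - r) := by
        rw [sub_eq_add_neg, Real.exp_add, Real.exp_log hxs]
  _ < Real.exp (Real.log y) := Real.exp_lt_exp.2 hlog
  _ = y := Real.exp_log hy

/-- `t ↦ (log x t − (log xs + r)) e^{αt}` is antitone where `x > 0` and `K ≤ Ks e^r`. -/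
lemma F_antitone {α p₀ xs Ks r t₀ s : ℝ} {x K : ℝ → ℝ}
    (hα : 0 < α) (hxs : 0 < xs) (hKs : 0 < Ks)
    (hlogKs : Real.log Ks = Real.log xs + p₀ / α)
    (hcx : ContinuousOn x (Set.Icc t₀ s))
    (hdx : ∀ t ∈ Set.Ioo t₀ s, HasDerivAt x (α * x t * Real.log (K t / x t) - p₀ * x t) t)
    (hxpos : ∀ t ∈ Set.Icc t₀ s, 0 < x t)
    (hKb : ∀ t ∈ Set.Ioo t₀ s, 0 < K t ∧ K t ≤ Ks * Real.exp r) :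
    AntitoneOn (fun t => (Real.log (x t) - (Real.log xs + r)) * Real.exp (α * t))
      (Set.Icc t₀ s) := by
  have hder : ∀ t ∈ Set.Ioo t₀ s, HasDerivAt
      (fun t => (Real.log (x t) - (Real.log xs + r)) * Real.exp (α * t))
      ((α * Real.log (K t) - α * Real.log xs - p₀ - α * r) * Real.exp (α * t)) t := by
    intro t ht
    have hxt : 0 < x t := hxpos t (Set.Ioo_subset_Icc_self ht)
    have hKt := hKb t ht
    have h1 : HasDerivAt (fun t => Real.log (x t))
        ((α * x t * Real.log (K t / x t) - p₀ * x t) / x t) t := (hdx t ht).log hxt.ne'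
    have h2 := h1.sub_const (Real.log xs + r)
    have hexp : HasDerivAt (fun t => Real.exp (α * t)) (Real.exp (α * t) * α) t := by
      simpa using ((hasDerivAt_id t).const_mul α).exp
    have hF := h2.mul hexp
    have hval : (α * x t * Real.log (K t / x t) - p₀ * x t) / x t * Real.exp (α * t)
        + (Real.log (x t) - (Real.log xs + r)) * (Real.exp (α * t) * α)
        = (α * Real.log (K t) - α * Real.log xs - p₀ - α * r) * Real.exp (α * t) := by
      rw [Real.log_div hKt.1.ne' hxt.ne']
      field_simp
      ring
    rwa [hval] at hF
  apply antitoneOn_of_deriv_nonpos (convex_Icc t₀ s)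
  · exact ((hcx.log (fun t ht => (hxpos t ht).ne')).sub continuousOn_const).mul
      ((Real.continuous_exp.comp (continuous_const.mul continuous_id)).continuousOn)
  · intro t ht
    rw [interior_Icc] at ht
    exact ((hder t ht).differentiableAt).differentiableWithinAt
  · intro t ht
    rw [interior_Icc] at ht
    rw [(hder t ht).deriv]
    have hKt := hKb t ht
    have hlogK : Real.log (K t) ≤ Real.log xs + p₀ / α + r := by
      have h3 : Real.log (K t) ≤ Real.log (Ks * Real.exp r) :=
        Real.log_le_log hKt.1 hKt.2
      rwa [Real.log_mul hKs.ne' (Real.exp_pos r).ne', Real.log_exp, hlogKs] at h3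
    have hfac : α * Real.log (K t) - α * Real.log xs - p₀ - α * r ≤ 0 := by
      nlinarith [mul_le_mul_of_nonneg_left hlogK hα.le, mul_div_cancel₀ p₀ hα.ne']
    exact mul_nonpos_of_nonpos_of_nonneg hfac (Real.exp_pos _).le

/-- `t ↦ ((log xs − r) − log x t) e^{αt}` is antitone where `x > 0` and `K ≥ Ks e^{-r}`. -/
lemma G_antitone {α p₀ xs Ks r t₀ s : ℝ} {x K : ℝ → ℝ}
    (hα : 0 < α) (hxs : 0 < xs) (hKs : 0 < Ks)
    (hlogKs : Real.log Ks = Real.log xs + p₀ / α)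
    (hcx : ContinuousOn x (Set.Icc t₀ s))
    (hdx : ∀ t ∈ Set.Ioo t₀ s, HasDerivAt x (α * x t * Real.log (K t / x t) - p₀ * x t) t)
    (hxpos : ∀ t ∈ Set.Icc t₀ s, 0 < x t)
    (hKb : ∀ t ∈ Set.Ioo t₀ s, Ks * Real.exp (-r) ≤ K t) :
    AntitoneOn (fun t => ((Real.log xs - r) - Real.log (x t)) * Real.exp (α * t))
      (Set.Icc t₀ s) := by
  have hder : ∀ t ∈ Set.Ioo t₀ s, HasDerivAt
      (fun t => ((Real.log xs - r) - Real.log (x t)) * Real.exp (α * t))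
      ((α * Real.log xs + p₀ - α * Real.log (K t) - α * r) * Real.exp (α * t)) t := by
    intro t ht
    have hxt : 0 < x t := hxpos t (Set.Ioo_subset_Icc_self ht)
    have hKt : 0 < K t := lt_of_lt_of_le (by positivity) (hKb t ht)
    have h1 : HasDerivAt (fun t => Real.log (x t))
        ((α * x t * Real.log (K t / x t) - p₀ * x t) / x t) t := (hdx t ht).log hxt.ne'
    have h2 := h1.const_sub (Real.log xs - r)
    have hexp : HasDerivAt (fun t => Real.exp (α * t)) (Real.exp (α * t) * α) t := by
      simpa using ((hasDerivAt_id t).const_mul α).exp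
    have hF := h2.mul hexp
    have hval : -((α * x t * Real.log (K t / x t) - p₀ * x t) / x t) * Real.exp (α * t)
        + ((Real.log xs - r) - Real.log (x t)) * (Real.exp (α * t) * α)
        = (α * Real.log xs + p₀ - α * Real.log (K t) - α * r) * Real.exp (α * t) := by
      rw [Real.log_div hKt.ne' hxt.ne']
      field_simp
      ring
    rwa [hval] at hF
  apply antitoneOn_of_deriv_nonpos (convex_Icc t₀ s)
  · exact (continuousOn_const.sub (hcx.log (fun t ht => (hxpos t ht).ne'))).mul
      ((Real.continuous_exp.comp (continuous_const.mul continuous_id)).continuousOn)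
  · intro t ht
    rw [interior_Icc] at ht
    exact ((hder t ht).differentiableAt).differentiableWithinAt
  · intro t ht
    rw [interior_Icc] at ht
    rw [(hder t ht).deriv]
    have hKt : 0 < K t := lt_of_lt_of_le (by positivity) (hKb t ht)
    have hlogK : Real.log xs + p₀ / α - r ≤ Real.log (K t) := by
      have h3 : Real.log (Ks * Real.exp (-r)) ≤ Real.log (K t) :=
        Real.log_le_log (by positivity) (hKb t ht)
      rwa [Real.log_mul hKs.ne' (Real.exp_pos _).ne', Real.log_exp, hlogKs,
        show Real.log xs + p₀ / α + -r = Real.log xs + p₀ / α - r by ring] at h3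
    have hfac : α * Real.log xs + p₀ - α * Real.log (K t) - α * r ≤ 0 := by
      nlinarith [mul_le_mul_of_nonneg_left hlogK hα.le, mul_div_cancel₀ p₀ hα.ne']
    exact mul_nonpos_of_nonpos_of_nonneg hfac (Real.exp_pos _).le


/-- main band lemma for x -/
lemma xband {α p₀ xs Ks r t₀ T : ℝ} {x K : ℝ → ℝ}
    (hα : 0 < α) (hxs : 0 < xs) (hKs : 0 < Ks) (hr : 0 < r)
    (hlogKs : Real.log Ks = Real.log xs + p₀ / α)
    (hT : t₀ ≤ T)
    (hcx : ContinuousOn x (Set.Icc t₀ T))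
    (hdx : ∀ t ∈ Set.Ioo t₀ T, HasDerivAt x (α * x t * Real.log (K t / x t) - p₀ * x t) t)
    (hKband : ∀ t ∈ Set.Icc t₀ T, Ks * Real.exp (-r) ≤ K t ∧ K t ≤ Ks * Real.exp r)
    (hx0l : xs * Real.exp (-(r/2)) ≤ x t₀) (hx0u : x t₀ ≤ xs * Real.exp (r/2)) :
    ∀ t ∈ Set.Icc t₀ T, xs * Real.exp (-r) < x t ∧ x t < xs * Real.exp r := by
  have hx0pos : 0 < x t₀ := lt_of_lt_of_le (by positivity) hx0l
  have hFt₀ : Real.log (x t₀) - (Real.log xs + r) < 0 := by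
    have h1 : Real.log (x t₀) ≤ Real.log (xs * Real.exp (r/2)) :=
      Real.log_le_log hx0pos hx0u
    rw [Real.log_mul hxs.ne' (Real.exp_pos _).ne', Real.log_exp] at h1
    linarith
  have hGt₀ : (Real.log xs - r) - Real.log (x t₀) < 0 := by
    have h1 : Real.log (xs * Real.exp (-(r/2))) ≤ Real.log (x t₀) :=
      Real.log_le_log (by positivity) hx0l
    rw [Real.log_mul hxs.ne' (Real.exp_pos _).ne', Real.log_exp] at h1
    linarith
  have hKpos : ∀ t ∈ Set.Icc t₀ T, 0 < K t := fun t ht =>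
    lt_of_lt_of_le (by positivity) (hKband t ht).1
  -- Step 1 : positivity of x on [t₀, T]
  have hpos : ∀ t ∈ Set.Icc t₀ T, 0 < x t := by
    by_contra hcon
    push_neg at hcon
    obtain ⟨tb, htb, hxtb⟩ := hcon
    set S0 := Set.Icc t₀ T ∩ x ⁻¹' Set.Iic 0 with hS0
    have hne : S0.Nonempty := ⟨tb, htb, hxtb⟩
    have hcl : IsClosed S0 := hcx.preimage_isClosed_of_isClosed isClosed_Icc isClosed_Iic
    have hcomp : IsCompact S0 := isCompact_Icc.of_isClosed_subset hcl Set.inter_subset_left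
    set tstar := sInf S0 with htstardef
    have hts : tstar ∈ S0 := hcomp.sInf_mem hne
    have htsIcc : tstar ∈ Set.Icc t₀ T := hts.1
    have hxts : x tstar ≤ 0 := hts.2
    have ht0ts : t₀ < tstar := by
      rcases lt_or_eq_of_le htsIcc.1 with h' | h'
      · exact h'
      · exact absurd hxts (not_le.2 (h' ▸ hx0pos))
    have hIco : ∀ t, t₀ ≤ t → t < tstar → 0 < x t := by
      intro t h1 h2
      by_contra hle
      push_neg at hle
      have : t ∈ S0 := ⟨⟨h1, le_trans h2.le htsIcc.2⟩, hle⟩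
      exact absurd (csInf_le hcomp.bddBelow this) (not_le.2 h2)
    have hlower : ∀ s, t₀ ≤ s → s < tstar → xs * Real.exp (-r) < x s := by
      intro s h1 h2
      have hsT : s ≤ T := le_trans h2.le htsIcc.2
      have hG := G_antitone (t₀ := t₀) (s := s) hα hxs hKs hlogKs
        (hcx.mono (Set.Icc_subset_Icc le_rfl hsT))
        (fun t ht => hdx t ⟨ht.1, lt_of_lt_of_le ht.2 hsT⟩)
        (fun t ht => hIco t ht.1 (lt_of_le_of_lt ht.2 h2))
        (fun t ht => (hKband t ⟨ht.1.le, le_trans ht.2.le hsT⟩).1)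
      have hGle := hG (Set.left_mem_Icc.2 h1) (Set.right_mem_Icc.2 h1) h1
      have hGs : ((Real.log xs - r) - Real.log (x s)) * Real.exp (α * s) < 0 :=
        lt_of_le_of_lt hGle (mul_neg_of_neg_of_pos hGt₀ (Real.exp_pos _))
      have hgs : (Real.log xs - r) - Real.log (x s) < 0 := by
        by_contra hge
        push_neg at hge
        exact absurd hGs (not_lt.2 (mul_nonneg hge (Real.exp_pos _).le))
      exact gt_exp_bound hxs (hIco s h1 h2) (by linarith)
    -- limit: x tstar ≥ xs e^{-r} > 0, contradiction
    have hnb : (𝓝[Set.Ico t₀ tstar] tstar).NeBot := by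
      refine mem_closure_iff_nhdsWithin_neBot.1 ?_
      rw [closure_Ico (ne_of_lt ht0ts)]
      exact Set.right_mem_Icc.2 ht0ts.le
    have htend : Filter.Tendsto x (𝓝[Set.Ico t₀ tstar] tstar) (𝓝 (x tstar)) :=
      ((hcx tstar htsIcc).mono
        (fun t ht => ⟨ht.1, le_trans ht.2.le htsIcc.2⟩)).tendsto
    have hgetend : xs * Real.exp (-r) ≤ x tstar := by
      refine ge_of_tendsto htend ?_
      filter_upwards [self_mem_nhdsWithin] with t ht
      exact (hlower t ht.1 ht.2).le
    have : (0:ℝ) < x tstar := lt_of_lt_of_le (by positivity) hgetend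
    linarith
  -- Step 2 : the strict band
  intro t ht
  constructor
  · have hG := G_antitone (t₀ := t₀) (s := T) hα hxs hKs hlogKs hcx
      (fun t ht => hdx t ht) hpos (fun t ht => (hKband t (Set.Ioo_subset_Icc_self ht)).1)
    have hGle := hG (Set.left_mem_Icc.2 hT) ht ht.1
    have hGs : ((Real.log xs - r) - Real.log (x t)) * Real.exp (α * t) < 0 :=
      lt_of_le_of_lt hGle (mul_neg_of_neg_of_pos hGt₀ (Real.exp_pos _))
    have hgs : (Real.log xs - r) - Real.log (x t) < 0 := by
      by_contra hge
      push_neg at hge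
      exact absurd hGs (not_lt.2 (mul_nonneg hge (Real.exp_pos _).le))
    exact gt_exp_bound hxs (hpos t ht) (by linarith)
  · have hF := F_antitone (t₀ := t₀) (s := T) hα hxs hKs hlogKs hcx
      (fun t ht => hdx t ht) hpos
      (fun t ht => ⟨hKpos t (Set.Ioo_subset_Icc_self ht),
        (hKband t (Set.Ioo_subset_Icc_self ht)).2⟩)
    have hFle := hF (Set.left_mem_Icc.2 hT) ht ht.1
    have hFs : (Real.log (x t) - (Real.log xs + r)) * Real.exp (α * t) < 0 :=
      lt_of_le_of_lt hFle (mul_neg_of_neg_of_pos hFt₀ (Real.exp_pos _))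
    have hfs : Real.log (x t) - (Real.log xs + r) < 0 := by
      by_contra hge
      push_neg at hge
      exact absurd hFs (not_lt.2 (mul_nonneg hge (Real.exp_pos _).le))
    exact lt_exp_bound hxs (hpos t ht) (by linarith)


/-- Invariance of the K band. -/
lemma Kband {α β γ δ p₀ c₀ τ t₀ xs Ks r : ℝ} {x K h : ℝ → ℝ}
    (hα : 0 < α) (hβ : 0 < β) (hγ : 0 < γ) (hδ : 0 < δ) (hp₀ : 0 < p₀)
    (hc₀ : 0 < c₀) (hτ : 0 < τ) (hxs : 0 < xs) (hKs : 0 < Ks) (hr : 0 < r)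
    (hlogKs : Real.log Ks = Real.log xs + p₀ / α)
    (hPhiStar : β * xs = ((γ + c₀) + δ * xs ^ ((2:ℝ)/3)) * Ks)
    (hcx : ContinuousOn x (Set.Ici (t₀ - τ)))
    (hcK : ContinuousOn K (Set.Ici (t₀ - τ)))
    (hdx : ∀ t, t₀ < t → HasDerivAt x (α * x t * Real.log (K t / x t) - p₀ * x t) t)
    (hdK : ∀ t, t₀ < t → HasDerivAt K
      (β * x (h t) - γ * K t - δ * x (h t) ^ ((2:ℝ)/3) * K t - c₀ * K t) t)
    (hdel : ∀ t, h t ≤ t ∧ t - h t ≤ τ)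
    (hinit : ∀ t ∈ Set.Icc (t₀ - τ) t₀,
      xs * Real.exp (-(r/2)) ≤ x t ∧ x t ≤ xs * Real.exp (r/2) ∧
      Ks * Real.exp (-(r/2)) ≤ K t ∧ K t ≤ Ks * Real.exp (r/2)) :
    ∀ t, t₀ ≤ t → Ks * Real.exp (-r) ≤ K t ∧ K t ≤ Ks * Real.exp r := by
  have hΓ : (0:ℝ) < γ + c₀ := by linarith
  have her : Real.exp (-r) < Real.exp (-(r/2)) := Real.exp_lt_exp.2 (by linarith)
  have her2 : Real.exp (r/2) < Real.exp r := Real.exp_lt_exp.2 (by linarith)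
  have htt : t₀ - τ < t₀ := by linarith
  by_contra hcon
  push_neg at hcon
  obtain ⟨tb, htb, hKtb⟩ := hcon
  set Sbad := {t : ℝ | t₀ ≤ t ∧ ¬(Ks * Real.exp (-r) ≤ K t ∧ K t ≤ Ks * Real.exp r)}
    with hSbad
  have hne : Sbad.Nonempty :=
    ⟨tb, htb, fun hb => absurd (hKtb hb.1) (not_lt.2 hb.2)⟩
  have hbdd : BddBelow Sbad := ⟨t₀, fun s hs => hs.1⟩
  set t₁ := sInf Sbad with ht₁def
  have ht₁ge : t₀ ≤ t₁ := le_csInf hne (fun s hs => hs.1)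
  have hband_lt : ∀ t, t₀ ≤ t → t < t₁ →
      Ks * Real.exp (-r) ≤ K t ∧ K t ≤ Ks * Real.exp r := by
    intro t h1 h2
    by_contra hnb
    exact absurd (csInf_le hbdd ⟨h1, hnb⟩) (not_le.2 h2)
  have hK0 := hinit t₀ ⟨htt.le, le_rfl⟩
  have hK0in : Ks * Real.exp (-r) < K t₀ ∧ K t₀ < Ks * Real.exp r :=
    ⟨lt_of_lt_of_le (mul_lt_mul_of_pos_left her hKs) hK0.2.2.1,
     lt_of_le_of_lt hK0.2.2.2 (mul_lt_mul_of_pos_left her2 hKs)⟩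
  -- t₁ > t₀
  have ht₁gt : t₀ < t₁ := by
    have hcont : ContinuousAt K t₀ := hcK.continuousAt (Ici_mem_nhds htt)
    have hU : K ⁻¹' Set.Ioo (Ks * Real.exp (-r)) (Ks * Real.exp r) ∈ 𝓝 t₀ :=
      hcont (Ioo_mem_nhds hK0in.1 hK0in.2)
    rw [Metric.mem_nhds_iff] at hU
    obtain ⟨ε, hε, hball⟩ := hU
    have hlb : t₀ + ε/2 ≤ t₁ := by
      apply le_csInf hne
      intro s hs
      by_contra hlt
      push_neg at hlt
      have hdist : s ∈ Metric.ball t₀ ε := by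
        rw [Metric.mem_ball, Real.dist_eq, abs_lt]
        constructor <;> [linarith [hs.1]; linarith]
      have hmem := hball hdist
      exact hs.2 ⟨hmem.1.le, hmem.2.le⟩
    linarith
  -- band holds at t₁ (by left limits)
  have hbandt₁ : Ks * Real.exp (-r) ≤ K t₁ ∧ K t₁ ≤ Ks * Real.exp r := by
    have hnb : (𝓝[Set.Ico t₀ t₁] t₁).NeBot := by
      refine mem_closure_iff_nhdsWithin_neBot.1 ?_
      rw [closure_Ico (ne_of_lt ht₁gt)]
      exact Set.right_mem_Icc.2 ht₁ge
    have htend : Filter.Tendsto K (𝓝[Set.Ico t₀ t₁] t₁) (𝓝 (K t₁)) :=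
      ((hcK t₁ (by simp only [Set.mem_Ici]; linarith)).mono
        (fun u hu => by simp only [Set.mem_Ici]; linarith [hu.1])).tendsto
    constructor
    · refine ge_of_tendsto htend ?_
      filter_upwards [self_mem_nhdsWithin] with u hu
      exact (hband_lt u hu.1 hu.2).1
    · refine le_of_tendsto htend ?_
      filter_upwards [self_mem_nhdsWithin] with u hu
      exact (hband_lt u hu.1 hu.2).2
  have hband₁ : ∀ t, t₀ ≤ t → t ≤ t₁ →
      Ks * Real.exp (-r) ≤ K t ∧ K t ≤ Ks * Real.exp r := by
    intro t h1 h2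
    rcases lt_or_eq_of_le h2 with h2' | h2'
    · exact hband_lt t h1 h2'
    · rw [h2']
      exact hbandt₁
  -- K t₁ is on the boundary
  have hseq : ∀ n : ℕ, ∃ s, s ∈ Sbad ∧ s < t₁ + 1/(n+1) := by
    intro n
    by_contra hno
    push_neg at hno
    have hle : t₁ + 1/((n:ℝ)+1) ≤ t₁ := le_csInf hne (fun s hs => by
      have := hno s hs
      exact_mod_cast this)
    have hposn : (0:ℝ) < 1/((n:ℝ)+1) := by positivity
    linarith
  choose s hsS hslt using hseq
  have hsge : ∀ n, t₁ ≤ s n := fun n => csInf_le hbdd (hsS n)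
  have hstend : Filter.Tendsto s atTop (𝓝 t₁) := by
    have h1 : Filter.Tendsto (fun n : ℕ => t₁ + 1/((n:ℝ)+1)) atTop (𝓝 t₁) := by
      have h2 := tendsto_one_div_add_atTop_nhds_zero_nat (𝕜 := ℝ)
      simpa using tendsto_const_nhds.add h2
    refine tendsto_of_tendsto_of_tendsto_of_le_of_le tendsto_const_nhds h1 hsge
      (fun n => ?_)
    have := hslt n
    push_cast at this ⊢
    linarith
  have hcont₁ : ContinuousAt K t₁ := hcK.continuousAt (Ici_mem_nhds (by linarith))
  have hKmem : K t₁ ≤ Ks * Real.exp (-r) ∨ Ks * Real.exp r ≤ K t₁ := by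
    have hC : IsClosed (Set.Iic (Ks * Real.exp (-r)) ∪ Set.Ici (Ks * Real.exp r)) :=
      isClosed_Iic.union isClosed_Ici
    have hmem : ∀ n, K (s n) ∈ Set.Iic (Ks * Real.exp (-r)) ∪ Set.Ici (Ks * Real.exp r) := by
      intro n
      have hb := (hsS n).2
      rw [not_and_or, not_le, not_le] at hb
      rcases hb with hb | hb
      · exact Or.inl hb.le
      · exact Or.inr hb.le
    have := hC.mem_of_tendsto (hcont₁.tendsto.comp hstend) (Eventually.of_forall hmem)
    simpa using this
  -- x band on [t₀, t₁]
  have hxb := xband hα hxs hKs hr hlogKs ht₁ge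
    (hcx.mono (fun t ht => by simp only [Set.mem_Ici] at ht ⊢; linarith [ht.1]))
    (fun t ht => hdx t ht.1)
    (fun t ht => hband₁ t ht.1 ht.2)
    hK0.1 hK0.2.1
  -- bounds on a = x (h t₁)
  have hht₁ := hdel t₁
  have hab : xs * Real.exp (-r) ≤ x (h t₁) ∧ x (h t₁) ≤ xs * Real.exp r := by
    rcases le_or_gt (h t₁) t₀ with hh | hh
    · have hi := hinit (h t₁) ⟨by linarith [hht₁.2], hh⟩
      exact ⟨le_trans (mul_le_mul_of_nonneg_left her.le hxs.le) hi.1,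
        le_trans hi.2.1 (mul_le_mul_of_nonneg_left her2.le hxs.le)⟩
    · have hx := hxb (h t₁) ⟨hh.le, hht₁.1⟩
      exact ⟨hx.1.le, hx.2.le⟩
  have hapos : 0 < x (h t₁) := lt_of_lt_of_le (by positivity) hab.1
  have ht₁band := hband₁ t₁ ht₁ge le_rfl
  have hD := hdK t₁ ht₁gt
  have hPhiV : β * xs / ((γ + c₀) + δ * xs ^ ((2:ℝ)/3)) = Ks := by
    rw [hPhiStar]
    have hpos : (0:ℝ) < (γ + c₀) + δ * xs ^ ((2:ℝ)/3) := by positivity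
    field_simp
  -- slope machinery (shared)
  have hslope := hasDerivAt_iff_tendsto_slope.1 hD
  have hslope' : Filter.Tendsto (slope K t₁) (𝓝[<] t₁)
      (𝓝 (β * x (h t₁) - γ * K t₁ - δ * x (h t₁) ^ ((2:ℝ)/3) * K t₁ - c₀ * K t₁)) :=
    hslope.mono_left (nhdsWithin_mono t₁ (fun y hy => ne_of_lt hy))
  have hev2 : ∀ᶠ u in 𝓝[<] t₁, t₀ < u :=
    eventually_nhdsWithin_of_eventually_nhds (lt_mem_nhds ht₁gt)
  have hev3 : ∀ᶠ u in 𝓝[<] t₁, u < t₁ := eventually_mem_nhdsWithin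
  rcases hKmem with hbot | htop
  · -- bottom boundary: derivative strictly positive
    have hKeq : K t₁ = Ks * Real.exp (-r) := le_antisymm hbot ht₁band.1
    have hφ := phi_scale_down hΓ hδ hβ hxs (Real.exp_pos (-r))
      (Real.exp_lt_one_iff.2 (by linarith))
    rw [hPhiV] at hφ
    have hε₂ : 0 < β * (Real.exp (-r) * xs) / ((γ+c₀) + δ * (Real.exp (-r) * xs) ^ ((2:ℝ)/3))
        - Ks * Real.exp (-r) := by
      linarith [hφ]
    have hkd := key_down (Kv := K t₁)
      (ε := β * (Real.exp (-r) * xs) / ((γ+c₀) + δ * (Real.exp (-r) * xs) ^ ((2:ℝ)/3))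
        - Ks * Real.exp (-r))
      hΓ hδ hβ (by positivity : (0:ℝ) < Real.exp (-r) * xs)
      (show Real.exp (-r) * xs ≤ x (h t₁) by linarith [hab.1]) hε₂.le
      (by rw [hKeq]; linarith)
    have hDpos : 0 < β * x (h t₁) - γ * K t₁ - δ * x (h t₁) ^ ((2:ℝ)/3) * K t₁ - c₀ * K t₁ := by
      linarith [hkd, mul_pos hΓ hε₂]
    have hev1 : ∀ᶠ u in 𝓝[<] t₁, 0 < slope K t₁ u :=
      hslope'.eventually (lt_mem_nhds hDpos)
    obtain ⟨u, ⟨hu1, hu2⟩, hu3⟩ := ((hev1.and hev2).and hev3).exists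
    rw [slope_def_field] at hu1
    have hKu : K u < K t₁ := by
      rcases div_pos_iff.1 hu1 with ⟨h1, h2⟩ | ⟨h1, h2⟩
      · linarith
      · linarith
    have huS : u ∈ Sbad := ⟨hu2.le, fun hb => by rw [hKeq] at hKu; linarith [hb.1]⟩
    exact absurd (csInf_le hbdd huS) (not_le.2 hu3)
  · -- top boundary: derivative strictly negative
    have hKeq : K t₁ = Ks * Real.exp r := le_antisymm ht₁band.2 htop
    have hφ := phi_scale_up hΓ hδ hβ hxs (show (1:ℝ) < Real.exp r by
      simpa using Real.exp_lt_exp.2 hr)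
    rw [hPhiV] at hφ
    have hε₁ : 0 < Ks * Real.exp r
        - β * (Real.exp r * xs) / ((γ+c₀) + δ * (Real.exp r * xs) ^ ((2:ℝ)/3)) := by
      linarith [hφ]
    have hku := key_up (Kv := K t₁)
      (ε := Ks * Real.exp r
        - β * (Real.exp r * xs) / ((γ+c₀) + δ * (Real.exp r * xs) ^ ((2:ℝ)/3)))
      hΓ hδ hβ hapos (show x (h t₁) ≤ Real.exp r * xs by linarith [hab.2]) hε₁.le
      (by rw [hKeq]; linarith)
    have hDneg : β * x (h t₁) - γ * K t₁ - δ * x (h t₁) ^ ((2:ℝ)/3) * K t₁ - c₀ * K t₁ < 0 := by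
      linarith [hku, mul_pos hΓ hε₁]
    have hev1 : ∀ᶠ u in 𝓝[<] t₁, slope K t₁ u < 0 :=
      hslope'.eventually (gt_mem_nhds hDneg)
    obtain ⟨u, ⟨hu1, hu2⟩, hu3⟩ := ((hev1.and hev2).and hev3).exists
    rw [slope_def_field] at hu1
    have hKu : K t₁ < K u := by
      rcases div_neg_iff.1 hu1 with ⟨h1, h2⟩ | ⟨h1, h2⟩
      · linarith
      · linarith
    have huS : u ∈ Sbad := ⟨hu2.le, fun hb => by rw [hKeq] at hKu; linarith [hb.2]⟩
    exact absurd (csInf_le hbdd huS) (not_le.2 hu3)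



lemma mini1 {L b c : ℝ} (hc : 0 < c) (h : ∀ s, b < s → L ≤ c * s) : L ≤ c * b := by
  by_contra hlt
  push_neg at hlt
  have hb : b < L / c := by rwa [lt_div_iff₀ hc, mul_comm]
  have h1 := h ((b + L/c)/2) (by linarith)
  have h2 : c * ((b + L/c)/2) < L := by
    have : c * (L / c) = L := by field_simp
    nlinarith
  linarith

lemma mini2 {L b c : ℝ} (hc : 0 < c) (hb : 0 < b)
    (h : ∀ s, 0 < s → s < b → c * s ≤ L) : c * b ≤ L := by
  by_contra hlt
  push_neg at hlt
  have hb' : L / c < b := by rwa [div_lt_iff₀ hc, mul_comm]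
  set s := (max (L/c) (b/2) + b)/2 with hs
  have hs0 : 0 < s := by
    have := le_max_right (L/c) (b/2)
    simp only [hs]
    nlinarith
  have hsb : s < b := by
    have h1 : max (L/c) (b/2) < b := max_lt hb' (by linarith)
    simp only [hs]; linarith
  have hsL : L < c * s := by
    have h1 : L/c ≤ max (L/c) (b/2) := le_max_left _ _
    have h2 : L/c < s := by simp only [hs]; nlinarith [hb', le_max_right (L/c) (b/2)]
    calc L = c * (L/c) := by field_simp
    _ < c * s := by nlinarith
  exact absurd (h s hs0 hsb) (not_le.2 hsL)

set_option maxHeartbeats 1000000 in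
/-- Convergence to the equilibrium, given the invariant bands. -/
lemma conv {α β γ δ p₀ c₀ τ t₀ xs Ks r : ℝ} {x K h : ℝ → ℝ}
    (hα : 0 < α) (hβ : 0 < β) (hγ : 0 < γ) (hδ : 0 < δ) (hp₀ : 0 < p₀)
    (hc₀ : 0 < c₀) (hτ : 0 < τ) (hxs : 0 < xs) (hKs : 0 < Ks) (hr : 0 < r)
    (hlogKs : Real.log Ks = Real.log xs + p₀ / α)
    (hPhiStar : β * xs = ((γ + c₀) + δ * xs ^ ((2:ℝ)/3)) * Ks)
    (hdx : ∀ t, t₀ < t → HasDerivAt x (α * x t * Real.log (K t / x t) - p₀ * x t) t)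
    (hdK : ∀ t, t₀ < t → HasDerivAt K
      (β * x (h t) - γ * K t - δ * x (h t) ^ ((2:ℝ)/3) * K t - c₀ * K t) t)
    (hdel : ∀ t, h t ≤ t ∧ t - h t ≤ τ)
    (hbx : ∀ t, t₀ ≤ t → xs * Real.exp (-r) ≤ x t ∧ x t ≤ xs * Real.exp r)
    (hbK : ∀ t, t₀ ≤ t → Ks * Real.exp (-r) ≤ K t ∧ K t ≤ Ks * Real.exp r) :
    Tendsto x atTop (𝓝 xs) ∧ Tendsto K atTop (𝓝 Ks) := by
  have hΓ : (0:ℝ) < γ + c₀ := by linarith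
  have hloxpos : (0:ℝ) < xs * Real.exp (-r) := by positivity
  have hloKpos : (0:ℝ) < Ks * Real.exp (-r) := by positivity
  have hexL : ∀ᶠ t in atTop, xs * Real.exp (-r) ≤ x t :=
    eventually_atTop.2 ⟨t₀, fun t ht => (hbx t ht).1⟩
  have hexU : ∀ᶠ t in atTop, x t ≤ xs * Real.exp r :=
    eventually_atTop.2 ⟨t₀, fun t ht => (hbx t ht).2⟩
  have hKL : ∀ᶠ t in atTop, Ks * Real.exp (-r) ≤ K t :=
    eventually_atTop.2 ⟨t₀, fun t ht => (hbK t ht).1⟩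
  have hKU : ∀ᶠ t in atTop, K t ≤ Ks * Real.exp r :=
    eventually_atTop.2 ⟨t₀, fun t ht => (hbK t ht).2⟩
  have bxU : IsBoundedUnder (· ≤ ·) atTop x := ⟨xs * Real.exp r, eventually_map.2 hexU⟩
  have bxL : IsBoundedUnder (· ≥ ·) atTop x := ⟨xs * Real.exp (-r), eventually_map.2 hexL⟩
  have bKU : IsBoundedUnder (· ≤ ·) atTop K := ⟨Ks * Real.exp r, eventually_map.2 hKU⟩
  have bKL : IsBoundedUnder (· ≥ ·) atTop K := ⟨Ks * Real.exp (-r), eventually_map.2 hKL⟩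
  have cbxU : IsCoboundedUnder (· ≤ ·) atTop x := bxL.isCoboundedUnder_le
  have cbxL : IsCoboundedUnder (· ≥ ·) atTop x := bxU.isCoboundedUnder_ge
  have cbKU : IsCoboundedUnder (· ≤ ·) atTop K := bKL.isCoboundedUnder_le
  have cbKL : IsCoboundedUnder (· ≥ ·) atTop K := bKU.isCoboundedUnder_ge
  set Lx := limsup x atTop with hLxdef
  set lx := liminf x atTop with hlxdef
  set LK := limsup K atTop with hLKdef
  set lK := liminf K atTop with hlKdef
  have hlxl : xs * Real.exp (-r) ≤ lx := le_liminf_of_le cbxL hexL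
  have hlKl : Ks * Real.exp (-r) ≤ lK := le_liminf_of_le cbKL hKL
  have hlxLx : lx ≤ Lx := liminf_le_limsup bxU bxL
  have hlKLK : lK ≤ LK := liminf_le_limsup bKU bKL
  have hLxpos : 0 < Lx := lt_of_lt_of_le hloxpos (le_trans hlxl hlxLx)
  have hlxpos : 0 < lx := lt_of_lt_of_le hloxpos hlxl
  have hLKpos : 0 < LK := lt_of_lt_of_le hloKpos (le_trans hlKl hlKLK)
  have hlKpos : 0 < lK := lt_of_lt_of_le hloKpos hlKl
  -- Claim CU
  have hCU : ∀ A, Lx < A → LK ≤ β * A / ((γ+c₀) + δ * A ^ ((2:ℝ)/3)) := by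
    intro A hA
    have hApos : 0 < A := lt_trans hLxpos hA
    refine le_of_forall_pos_le_add ?_
    intro ε hε
    obtain ⟨T, hT⟩ := eventually_atTop.1 (eventually_lt_of_limsup_lt hA bxU)
    have hbar := bar (f := K)
      (g := fun t => β * x (h t) - γ * K t - δ * x (h t) ^ ((2:ℝ)/3) * K t - c₀ * K t)
      (T₁ := max (T + τ) (t₀ + τ + 1))
      (M := β * A / ((γ+c₀) + δ * A ^ ((2:ℝ)/3)) + ε) (m := (γ+c₀) * ε)
      (by positivity)
      (fun t ht => hdK t (by
        have := le_trans (le_max_right _ _) ht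
        linarith))
      (fun t ht hM => by
        have h1 : t₀ + τ + 1 ≤ t := le_trans (le_max_right _ _) ht
        have h2 : T + τ ≤ t := le_trans (le_max_left _ _) ht
        have hht := hdel t
        have hhT : T ≤ h t := by linarith [hht.2]
        have hht0 : t₀ ≤ h t := by linarith [hht.2]
        have hapos : 0 < x (h t) := lt_of_lt_of_le hloxpos (hbx _ hht0).1
        have haA : x (h t) ≤ A := (hT _ hhT).le
        have hku := key_up (Kv := K t) (ε := ε) hΓ hδ hβ hapos haA hε.le hM.le
        linarith)
    have := limsup_le_of_le cbKU hbar
    linarith [this]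
  -- Claim CL
  have hCL : ∀ B, 0 < B → B < lx → β * B / ((γ+c₀) + δ * B ^ ((2:ℝ)/3)) ≤ lK := by
    intro B hB0 hB
    refine le_of_forall_pos_le_add ?_
    intro ε hε
    obtain ⟨T, hT⟩ := eventually_atTop.1 (eventually_lt_of_lt_liminf hB bxL)
    have hbar := bar (f := fun t => -(K t))
      (g := fun t => -(β * x (h t) - γ * K t - δ * x (h t) ^ ((2:ℝ)/3) * K t - c₀ * K t))
      (T₁ := max (T + τ) (t₀ + τ + 1))
      (M := -(β * B / ((γ+c₀) + δ * B ^ ((2:ℝ)/3)) - ε)) (m := (γ+c₀) * ε)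
      (by positivity)
      (fun t ht => (hdK t (by
        have := le_trans (le_max_right _ _) ht
        linarith)).neg)
      (fun t ht hM => by
        have h1 : t₀ + τ + 1 ≤ t := le_trans (le_max_right _ _) ht
        have h2 : T + τ ≤ t := le_trans (le_max_left _ _) ht
        have hht := hdel t
        have hhT : T ≤ h t := by linarith [hht.2]
        have hht0 : t₀ ≤ h t := by linarith [hht.2]
        have hapos : 0 < x (h t) := lt_of_lt_of_le hloxpos (hbx _ hht0).1
        have haB : B ≤ x (h t) := (hT _ hhT).le
        have hkd := key_down (Kv := K t) (ε := ε) hΓ hδ hβ hB0 haB hε.le (by linarith)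
        linarith)
    have hev : ∀ᶠ t in atTop, β * B / ((γ+c₀) + δ * B ^ ((2:ℝ)/3)) - ε ≤ K t := by
      filter_upwards [hbar] with t ht
      linarith
    have := le_liminf_of_le cbKL hev
    linarith [this]
  -- Claim XU : Lx ≤ (xs/Ks) LK
  have hXU : ∀ θ, 0 < θ → ∀ s, LK < s → Lx ≤ xs * s * (1+θ) / Ks := by
    intro θ hθ s hs
    have hspos : 0 < s := lt_trans hLKpos hs
    obtain ⟨T, hT⟩ := eventually_atTop.1 (eventually_lt_of_limsup_lt hs bKU)
    have hMpos : 0 < xs * s * (1+θ) / Ks := by positivity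
    have hlog1θ : 0 < Real.log (1+θ) := Real.log_pos (by linarith)
    have hbar := bar (f := x)
      (g := fun t => α * x t * Real.log (K t / x t) - p₀ * x t)
      (T₁ := max T (t₀ + 1)) (M := xs * s * (1+θ) / Ks)
      (m := α * (xs * s * (1+θ) / Ks) * Real.log (1+θ))
      (by positivity)
      (fun t ht => hdx t (by
        have := le_trans (le_max_right _ _) ht
        linarith))
      (fun t ht hM => by
        have h1 : t₀ + 1 ≤ t := le_trans (le_max_right _ _) ht
        have h2 : T ≤ t := le_trans (le_max_left _ _) ht
        have hxpos : 0 < x t := lt_trans hMpos hM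
        have hKpos : 0 < K t := lt_of_lt_of_le hloKpos (hbK t (by linarith)).1
        have hKu : K t < s := hT t h2
        have hlogM : Real.log (xs * s * (1+θ) / Ks)
            = Real.log xs + Real.log s + Real.log (1+θ) - Real.log Ks := by
          rw [Real.log_div (by positivity) hKs.ne',
            Real.log_mul (by positivity) (by positivity : (0:ℝ) < 1+θ).ne',
            Real.log_mul hxs.ne' hspos.ne']
        have hlogx : Real.log (xs * s * (1+θ) / Ks) ≤ Real.log (x t) :=
          Real.log_le_log hMpos hM.le
        have hlogK : Real.log (K t) < Real.log s := Real.log_lt_log hKpos hKu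
        have hc : Real.log (K t) - Real.log (x t) - p₀/α ≤ -Real.log (1+θ) := by
          rw [hlogM] at hlogx
          linarith [hlogKs]
        have hgeq : α * x t * Real.log (K t / x t) - p₀ * x t
            = α * x t * (Real.log (K t) - Real.log (x t) - p₀/α) := by
          rw [Real.log_div hKpos.ne' hxpos.ne']
          field_simp
        show α * x t * Real.log (K t / x t) - p₀ * x t
            ≤ -(α * (xs * s * (1+θ) / Ks) * Real.log (1+θ))
        rw [hgeq]
        calc α * x t * (Real.log (K t) - Real.log (x t) - p₀/α)
            ≤ α * x t * (-Real.log (1+θ)) := by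
              apply mul_le_mul_of_nonneg_left hc (by positivity)
        _ ≤ -(α * (xs * s * (1+θ) / Ks) * Real.log (1+θ)) := by
              nlinarith [mul_pos (mul_pos hα hlog1θ) (sub_pos.2 hM)])
    exact limsup_le_of_le cbxU hbar
  have hXU2 : Lx ≤ xs / Ks * LK := by
    have hstep : ∀ θ, 0 < θ → Lx ≤ (xs * (1+θ) / Ks) * LK := by
      intro θ hθ
      have hc : 0 < xs * (1+θ) / Ks := by positivity
      apply mini1 hc
      intro s hs
      have := hXU θ hθ s hs
      calc Lx ≤ xs * s * (1+θ) / Ks := this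
      _ = xs * (1+θ) / Ks * s := by ring
    refine le_of_forall_pos_le_add ?_
    intro ε hε
    have hc0 : 0 < xs / Ks * LK := by positivity
    have hθ : 0 < ε * Ks / (xs * LK) := by positivity
    have := hstep _ hθ
    have heq : (xs * (1 + ε * Ks / (xs * LK)) / Ks) * LK = xs / Ks * LK + ε := by
      field_simp
    linarith [heq ▸ this]

  -- Claim XL : (xs/Ks) lK ≤ lx
  have hXL : ∀ θ, 0 < θ → θ < 1 → ∀ s, 0 < s → s < lK → xs * s * (1-θ) / Ks ≤ lx := by
    intro θ hθ0 hθ1 s hs0 hs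
    have h1θ : (0:ℝ) < 1 - θ := by linarith
    obtain ⟨T, hT⟩ := eventually_atTop.1 (eventually_lt_of_lt_liminf hs bKL)
    have hMpos : 0 < xs * s * (1-θ) / Ks := div_pos (mul_pos (mul_pos hxs hs0) h1θ) hKs
    have hlog1θ : 0 < -Real.log (1-θ) := by
      have hl : Real.log (1-θ) < 0 := Real.log_neg h1θ (by linarith)
      linarith
    have hbar := bar (f := fun t => -(x t))
      (g := fun t => -(α * x t * Real.log (K t / x t) - p₀ * x t))
      (T₁ := max T (t₀ + 1)) (M := -(xs * s * (1-θ) / Ks))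
      (m := α * (xs * Real.exp (-r)) * (-Real.log (1-θ)))
      (by positivity)
      (fun t ht => (hdx t (by
        have := le_trans (le_max_right _ _) ht
        linarith)).neg)
      (fun t ht hM => by
        have h1 : t₀ + 1 ≤ t := le_trans (le_max_right _ _) ht
        have h2 : T ≤ t := le_trans (le_max_left _ _) ht
        have hxM : x t < xs * s * (1-θ) / Ks := by linarith [hM]
        have hxl : xs * Real.exp (-r) ≤ x t := (hbx t (by linarith)).1
        have hxpos : 0 < x t := lt_of_lt_of_le hloxpos hxl
        have hKu : s < K t := hT t h2
        have hKpos : 0 < K t := lt_trans hs0 hKu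
        have hlogM : Real.log (xs * s * (1-θ) / Ks)
            = Real.log xs + Real.log s + Real.log (1-θ) - Real.log Ks := by
          rw [Real.log_div (mul_pos (mul_pos hxs hs0) h1θ).ne' hKs.ne',
            Real.log_mul (mul_pos hxs hs0).ne' h1θ.ne',
            Real.log_mul hxs.ne' hs0.ne']
        have hlogx : Real.log (x t) < Real.log (xs * s * (1-θ) / Ks) :=
          Real.log_lt_log hxpos hxM
        have hlogK : Real.log s < Real.log (K t) := Real.log_lt_log hs0 hKu
        have hc : -Real.log (1-θ) ≤ Real.log (K t) - Real.log (x t) - p₀/α := by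
          rw [hlogM] at hlogx
          linarith [hlogKs]
        have hgeq : α * x t * Real.log (K t / x t) - p₀ * x t
            = α * x t * (Real.log (K t) - Real.log (x t) - p₀/α) := by
          rw [Real.log_div hKpos.ne' hxpos.ne']
          field_simp
        show -(α * x t * Real.log (K t / x t) - p₀ * x t)
            ≤ -(α * (xs * Real.exp (-r)) * (-Real.log (1-θ)))
        rw [hgeq]
        have h3 : α * (xs * Real.exp (-r)) * (-Real.log (1-θ))
            ≤ α * x t * (-Real.log (1-θ)) := by
          nlinarith [mul_nonneg (mul_nonneg hα.le (sub_nonneg.2 hxl)) hlog1θ.le]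
        have h4 : α * x t * (-Real.log (1-θ))
            ≤ α * x t * (Real.log (K t) - Real.log (x t) - p₀/α) := by
          apply mul_le_mul_of_nonneg_left hc (by positivity)
        linarith)
    have hev : ∀ᶠ t in atTop, xs * s * (1-θ) / Ks ≤ x t := by
      filter_upwards [hbar] with t ht
      linarith
    exact le_liminf_of_le cbxL hev
  have hXL2 : xs / Ks * lK ≤ lx := by
    have hstep : ∀ θ, 0 < θ → θ < 1 → (xs * (1-θ) / Ks) * lK ≤ lx := by
      intro θ hθ0 hθ1
      have h1θ : (0:ℝ) < 1 - θ := by linarith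
      have hc : 0 < xs * (1-θ) / Ks := div_pos (mul_pos hxs h1θ) hKs
      apply mini2 hc hlKpos
      intro s hs0 hs
      have := hXL θ hθ0 hθ1 s hs0 hs
      calc xs * (1-θ) / Ks * s = xs * s * (1-θ) / Ks := by ring
      _ ≤ lx := this
    refine le_of_forall_pos_le_add ?_
    intro ε hε
    have hc0 : 0 < xs / Ks * lK := by positivity
    set θ := min (1/2 : ℝ) (ε / (xs / Ks * lK)) with hθdef
    have hθ0 : 0 < θ := lt_min (by norm_num) (by positivity)
    have hθ1 : θ < 1 := lt_of_le_of_lt (min_le_left _ _) (by norm_num)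
    have h1 := hstep θ hθ0 hθ1
    have h2 : θ * (xs / Ks * lK) ≤ ε := by
      have h3 : θ ≤ ε / (xs / Ks * lK) := min_le_right _ _
      calc θ * (xs / Ks * lK) ≤ (ε / (xs / Ks * lK)) * (xs / Ks * lK) := by nlinarith
      _ = ε := by field_simp
    have heq : (xs * (1-θ) / Ks) * lK = xs / Ks * lK - θ * (xs / Ks * lK) := by ring
    linarith [heq ▸ h1]
  -- equilibrium value of Φ
  have hPhiV : β * xs / ((γ + c₀) + δ * xs ^ ((2:ℝ)/3)) = Ks := by
    rw [hPhiStar]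
    have hpos : (0:ℝ) < (γ + c₀) + δ * xs ^ ((2:ℝ)/3) := by positivity
    field_simp
  -- Endgame upper: LK ≤ Ks
  have hLKle : LK ≤ Ks := by
    by_contra hgt
    push_neg at hgt
    have hw1 : 1 < LK / Ks := (one_lt_div hKs).2 hgt
    have hwpos : 0 < LK / Ks := lt_trans one_pos hw1
    have hwxs : 0 < LK / Ks * xs := by positivity
    have hΦpos : 0 < β * (LK / Ks * xs) / ((γ+c₀) + δ * (LK / Ks * xs) ^ ((2:ℝ)/3)) := by
      positivity
    have hstep : ∀ θ, 0 < θ →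
        LK ≤ (1+θ) * (β * (LK / Ks * xs) / ((γ+c₀) + δ * (LK / Ks * xs) ^ ((2:ℝ)/3))) := by
      intro θ hθ
      have hA : Lx < (1+θ) * (LK / Ks * xs) := by
        have h2 : xs / Ks * LK = LK / Ks * xs := by ring
        nlinarith [hXU2, hwxs]
      have h3 := hCU ((1+θ) * (LK / Ks * xs)) hA
      have h4 := phi_scale_up hΓ hδ hβ hwxs (show (1:ℝ) < 1+θ by linarith)
      linarith
    have hLKΦ : LK ≤ β * (LK / Ks * xs) / ((γ+c₀) + δ * (LK / Ks * xs) ^ ((2:ℝ)/3)) := by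
      refine le_of_forall_pos_le_add ?_
      intro ε hε
      have hθ : 0 < ε / (β * (LK / Ks * xs) / ((γ+c₀) + δ * (LK / Ks * xs) ^ ((2:ℝ)/3))) := by
        positivity
      have h1 := hstep _ hθ
      have heq : (1 + ε / (β * (LK / Ks * xs) / ((γ+c₀) + δ * (LK / Ks * xs) ^ ((2:ℝ)/3))))
          * (β * (LK / Ks * xs) / ((γ+c₀) + δ * (LK / Ks * xs) ^ ((2:ℝ)/3)))
          = β * (LK / Ks * xs) / ((γ+c₀) + δ * (LK / Ks * xs) ^ ((2:ℝ)/3)) + ε := by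
        field_simp
      linarith [heq ▸ h1]
    have h5 := phi_scale_up hΓ hδ hβ hxs hw1
    rw [hPhiV] at h5
    have h6 : LK / Ks * Ks = LK := by field_simp
    linarith [h6 ▸ h5]
  -- Endgame lower: Ks ≤ lK
  have hlKge : Ks ≤ lK := by
    by_contra hlt
    push_neg at hlt
    have hw1 : lK / Ks < 1 := (div_lt_one hKs).2 hlt
    have hwpos : 0 < lK / Ks := by positivity
    have hwxs : 0 < lK / Ks * xs := by positivity
    have hΦpos : 0 < β * (lK / Ks * xs) / ((γ+c₀) + δ * (lK / Ks * xs) ^ ((2:ℝ)/3)) := by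
      positivity
    have hstep : ∀ θ, 0 < θ → θ < 1 →
        (1-θ) * (β * (lK / Ks * xs) / ((γ+c₀) + δ * (lK / Ks * xs) ^ ((2:ℝ)/3))) ≤ lK := by
      intro θ hθ0 hθ1
      have h1θ : (0:ℝ) < 1 - θ := by linarith
      have hB : (1-θ) * (lK / Ks * xs) < lx := by
        have h2 : xs / Ks * lK = lK / Ks * xs := by ring
        nlinarith [hXL2, hwxs]
      have h3 := hCL ((1-θ) * (lK / Ks * xs)) (mul_pos h1θ hwxs) hB
      have h4 := phi_scale_down hΓ hδ hβ hwxs (show (0:ℝ) < 1-θ by linarith)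
        (show (1:ℝ)-θ < 1 by linarith)
      linarith
    have hlKΦ : β * (lK / Ks * xs) / ((γ+c₀) + δ * (lK / Ks * xs) ^ ((2:ℝ)/3)) ≤ lK := by
      refine le_of_forall_pos_le_add ?_
      intro ε hε
      set Φv := β * (lK / Ks * xs) / ((γ+c₀) + δ * (lK / Ks * xs) ^ ((2:ℝ)/3)) with hΦv
      set θ := min (1/2 : ℝ) (ε / Φv) with hθdef
      have hθ0 : 0 < θ := lt_min (by norm_num) (by positivity)
      have hθ1 : θ < 1 := lt_of_le_of_lt (min_le_left _ _) (by norm_num)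
      have h1 := hstep θ hθ0 hθ1
      have h2 : θ * Φv ≤ ε := by
        have h3 : θ ≤ ε / Φv := min_le_right _ _
        calc θ * Φv ≤ (ε / Φv) * Φv := by nlinarith [hΦpos]
        _ = ε := by field_simp
      nlinarith [h1]
    have h5 := phi_scale_down hΓ hδ hβ hxs hwpos hw1
    rw [hPhiV] at h5
    have h6 : lK / Ks * Ks = lK := by field_simp
    linarith [h6 ▸ h5]
  -- conclude
  have hKtend : Tendsto K atTop (𝓝 Ks) :=
    tendsto_of_le_liminf_of_limsup_le hlKge hLKle bKU bKL
  have hLxle : Lx ≤ xs := by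
    have h1 : xs / Ks * LK ≤ xs / Ks * Ks :=
      mul_le_mul_of_nonneg_left hLKle (by positivity)
    have h2 : xs / Ks * Ks = xs := by field_simp
    linarith [hXU2]
  have hlxge : xs ≤ lx := by
    have h1 : xs / Ks * Ks ≤ xs / Ks * lK :=
      mul_le_mul_of_nonneg_left hlKge (by positivity)
    have h2 : xs / Ks * Ks = xs := by field_simp
    linarith [hXL2]
  have hxtend : Tendsto x atTop (𝓝 xs) :=
    tendsto_of_le_liminf_of_limsup_le hlxge hLxle bxU bxL
  exact ⟨hxtend, hKtend⟩


end Model1Theorem3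
open Real Filter

set_option maxHeartbeats 1000000 in
/-- Theorem 3 (local asymptotic stability for Model 1 with constant treatment):
for the system dx/dt = αx ln(K/x) − p₀x, dK/dt = βx(h(t)) − γK − δx^{2/3}(h(t))K − c₀K
with t − h(t) ≤ τ and β > (γ + c₀)e^{p₀/α}, the positive equilibrium
(x*, K*) = (((η − γ − c₀)/δ)^{3/2}, x* e^{p₀/α}), η = βe^{−p₀/α}, is locally
asymptotically stable: for every ε > 0 there is δ' > 0 such that every solution
whose initial data on [t₀ − τ, t₀] stays within δ' of (x*, K*) remains within ε
for all t ≥ t₀ and converges to (x*, K*). -/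
theorem model1_equilibrium_locally_asymptotically_stable
    (α β γ δ p₀ c₀ τ t₀ : ℝ)
    (hα : 0 < α) (hβ : 0 < β) (hγ : 0 < γ) (hδ : 0 < δ)
    (hp₀ : 0 < p₀) (hc₀ : 0 < c₀) (hτ : 0 < τ)
    (h : ℝ → ℝ) (hhm : Measurable h) (hdel : ∀ t, h t ≤ t ∧ t - h t ≤ τ)
    (hcond : β > (γ + c₀) * Real.exp (p₀ / α)) :
    let η := β * Real.exp (-(p₀ / α))
    let xstar := ((η - γ - c₀) / δ) ^ ((3:ℝ)/2)
    let Kstar := xstar * Real.exp (p₀ / α)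
    ∀ ε > 0, ∃ δ' > 0, ∀ x K : ℝ → ℝ,
      ContinuousOn x (Set.Ici (t₀ - τ)) → ContinuousOn K (Set.Ici (t₀ - τ)) →
      (∀ t, t₀ < t →
        HasDerivAt x (α * x t * Real.log (K t / x t) - p₀ * x t) t) →
      (∀ t, t₀ < t →
        HasDerivAt K
          (β * x (h t) - γ * K t - δ * x (h t) ^ ((2:ℝ)/3) * K t - c₀ * K t) t) →
      (∀ t ∈ Set.Icc (t₀ - τ) t₀, |x t - xstar| ≤ δ' ∧ |K t - Kstar| ≤ δ') →
      (∀ t, t₀ ≤ t → |x t - xstar| ≤ ε ∧ |K t - Kstar| ≤ ε) ∧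
      Tendsto x atTop (nhds xstar) ∧ Tendsto K atTop (nhds Kstar) := by
  intro η xstar Kstar ε hε
  have hηdef : η = β * Real.exp (-(p₀ / α)) := rfl
  have hxdef : xstar = ((η - γ - c₀) / δ) ^ ((3:ℝ)/2) := rfl
  have hKdef : Kstar = xstar * Real.exp (p₀ / α) := rfl
  have hkey : Real.exp (p₀ / α) * Real.exp (-(p₀ / α)) = 1 := by
    rw [← Real.exp_add]; simp
  have hηγ : γ + c₀ < η := by
    rw [hηdef]
    have h2 : (γ+c₀) * (Real.exp (p₀/α) * Real.exp (-(p₀/α))) = γ+c₀ := by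
      rw [hkey]; ring
    nlinarith [mul_pos (sub_pos.2 hcond) (Real.exp_pos (-(p₀/α))), h2]
  have hbase : 0 < (η - γ - c₀) / δ := div_pos (by linarith) hδ
  have hxs : 0 < xstar := by rw [hxdef]; exact Real.rpow_pos_of_pos hbase _
  have hKs : 0 < Kstar := by rw [hKdef]; exact mul_pos hxs (Real.exp_pos _)
  have hd23 : δ * xstar ^ ((2:ℝ)/3) = η - γ - c₀ := by
    rw [hxdef, ← Real.rpow_mul hbase.le]
    norm_num
    field_simp
  have hPhiStar : β * xstar = ((γ + c₀) + δ * xstar ^ ((2:ℝ)/3)) * Kstar := by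
    rw [hd23, hKdef, hηdef]
    linear_combination (-(β * xstar)) * hkey
  have hlogKs : Real.log Kstar = Real.log xstar + p₀ / α := by
    rw [hKdef, Real.log_mul hxs.ne' (Real.exp_pos _).ne', Real.log_exp]
  set ε' := ε / (xstar + Kstar + 1) with hε'def
  have hε'pos : 0 < ε' := div_pos hε (by linarith)
  set r := Real.log (1 + ε') with hrdef
  have hr : 0 < r := Real.log_pos (by linarith)
  have herp : Real.exp r = 1 + ε' := Real.exp_log (by linarith)
  have hs2 : 0 < 1 - Real.exp (-(r/2)) := by
    have h1 : Real.exp (-(r/2)) < 1 := Real.exp_lt_one_iff.2 (by linarith)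
    linarith
  refine ⟨min xstar Kstar * (1 - Real.exp (-(r/2))),
    mul_pos (lt_min hxs hKs) hs2, ?_⟩
  intro x K hcx hcK hdx hdK hinit0
  -- initial data half-band conversion
  have hconv : ∀ y ys : ℝ, 0 < ys → min xstar Kstar ≤ ys →
      |y - ys| ≤ min xstar Kstar * (1 - Real.exp (-(r/2))) →
      ys * Real.exp (-(r/2)) ≤ y ∧ y ≤ ys * Real.exp (r/2) := by
    intro y ys hys hmin hy
    rw [abs_le] at hy
    have hδle : min xstar Kstar * (1 - Real.exp (-(r/2))) ≤ ys * (1 - Real.exp (-(r/2))) :=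
      mul_le_mul_of_nonneg_right hmin hs2.le
    have hskey : Real.exp (-(r/2)) * Real.exp (r/2) = 1 := by
      rw [← Real.exp_add]; simp
    have hspos : 0 < Real.exp (-(r/2)) := Real.exp_pos _
    constructor
    · nlinarith [hy.1]
    · have h3 : ys * (Real.exp (-(r/2)) * Real.exp (r/2)) = ys := by rw [hskey]; ring
      nlinarith [hy.2, mul_nonneg hys.le (sq_nonneg (Real.exp (-(r/2)) - 1)), h3, hspos]
  have hinitband : ∀ t ∈ Set.Icc (t₀ - τ) t₀,
      xstar * Real.exp (-(r/2)) ≤ x t ∧ x t ≤ xstar * Real.exp (r/2) ∧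
      Kstar * Real.exp (-(r/2)) ≤ K t ∧ K t ≤ Kstar * Real.exp (r/2) := by
    intro t ht
    obtain ⟨h1, h2⟩ := hinit0 t ht
    have hx' := hconv (x t) xstar hxs (min_le_left _ _) h1
    have hK' := hconv (K t) Kstar hKs (min_le_right _ _) h2
    exact ⟨hx'.1, hx'.2, hK'.1, hK'.2⟩
  -- K band invariance
  have hbK := Model1Theorem3.Kband hα hβ hγ hδ hp₀ hc₀ hτ hxs hKs hr hlogKs hPhiStar
    hcx hcK hdx hdK hdel hinitband
  -- x band
  have htt : t₀ - τ ≤ t₀ := by linarith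
  have hbx : ∀ t, t₀ ≤ t → xstar * Real.exp (-r) ≤ x t ∧ x t ≤ xstar * Real.exp r := by
    intro t ht
    have hxb := Model1Theorem3.xband hα hxs hKs hr hlogKs ht
      (hcx.mono (fun u hu => Set.mem_Ici.2 (le_trans htt hu.1)))
      (fun u hu => hdx u hu.1)
      (fun u hu => hbK u hu.1)
      (hinitband t₀ ⟨htt, le_rfl⟩).1 (hinitband t₀ ⟨htt, le_rfl⟩).2.1
    have h4 := hxb t ⟨ht, le_rfl⟩
    exact ⟨h4.1.le, h4.2.le⟩
  -- band ⇒ ε-closeness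
  have h6 : ∀ ys : ℝ, 0 < ys → ys ≤ xstar + Kstar → ys * ε' ≤ ε := by
    intro ys hys hsum
    rw [hε'def]
    have h7 : ys / (xstar+Kstar+1) ≤ 1 := by
      rw [div_le_one (by linarith)]; linarith
    calc ys * (ε/(xstar+Kstar+1)) = (ys/(xstar+Kstar+1)) * ε := by ring
    _ ≤ 1 * ε := mul_le_mul_of_nonneg_right h7 hε.le
    _ = ε := one_mul ε
  have hband2eps : ∀ y ys : ℝ, 0 < ys → ys ≤ xstar + Kstar →
      ys * Real.exp (-r) ≤ y → y ≤ ys * Real.exp r → |y - ys| ≤ ε := by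
    intro y ys hys hsum hl hu
    rw [abs_le]
    have hern : Real.exp (-r) = (1 + ε')⁻¹ := by rw [Real.exp_neg, herp]
    have h1p : (0:ℝ) < 1 + ε' := by linarith
    have h4 : 1 - (1+ε')⁻¹ = ε'/(1+ε') := by field_simp; ring
    have h1 : (1:ℝ) - (1+ε')⁻¹ ≤ ε' := by
      rw [h4]
      exact div_le_self hε'pos.le (by linarith)
    have h5 : ys * (1 - Real.exp (-r)) ≤ ys * ε' := by
      rw [hern]; exact mul_le_mul_of_nonneg_left h1 hys.le
    have h6' := h6 ys hys hsum
    constructor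
    · nlinarith [hl]
    · have h8 : y - ys ≤ ys * (Real.exp r - 1) := by nlinarith [hu]
      rw [herp] at h8
      nlinarith [h8]
  refine ⟨?_, ?_⟩
  · intro t ht
    exact ⟨hband2eps (x t) xstar hxs (by linarith) (hbx t ht).1 (hbx t ht).2,
      hband2eps (K t) Kstar hKs (by linarith) (hbK t ht).1 (hbK t ht).2⟩
  · exact Model1Theorem3.conv hα hβ hγ hδ hp₀ hc₀ hτ hxs hKs hr hlogKs hPhiStar
      hdx hdK hdel hbx hbK
end
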